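/- Fix constants C# > 0 and Θ > 0. For each j ∈ ℕ (j ≥ 1), let γ_j : [0, L_j] → ℝ² be an injective unit-speed curve of class C⁴ with 0 < L_j ≤ 4π whose curvature κ_j satisfies κ_j(s) > 0, |κ_j'(s)| ≤ C#·(κ_j(s) + 2Θ)², and |κ_j''(s)| ≤ C#·(κ_j(s) + 2Θ)³ for all s ∈ [0, L_j]. Assume that for all s, t ∈ [0, L_j] one has ((1 + 1/j)·κ_j(s)/2)·‖γ_j(s) − γ_j(t)‖² − ⟨γ_j(s) − γ_j(t), ν_j(s)⟩ ≥ 0 (the inscribed radius is at least 1/((1+1/j)·κ_j) at every point), and that κ_j(p_j) = 1 for some p_j ∈ [0, L_j]. Then inf_{s ∈ [0, L_j]} κ_j(s) → 1 as j → ∞. -/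

import Mathlib

open Real Set Filter

noncomputable section

/-- The second derivative of a plane curve, componentwise. -/
def d2 (γ : ℝ → ℝ × ℝ) (s : ℝ) : ℝ × ℝ :=
  (deriv (fun u => (deriv γ u).1) s, deriv (fun u => (deriv γ u).2) s)

/-- The outward unit normal `ν(s) = (γ'₂(s), −γ'₁(s))` of a unit-speed plane curve. -/
def nor (γ : ℝ → ℝ × ℝ) (s : ℝ) : ℝ × ℝ := ((deriv γ s).2, -(deriv γ s).1)

/-- The geodesic curvature `κ(s) = γ'₁(s)·γ''₂(s) − γ'₂(s)·γ''₁(s)` of a unit-speed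
plane curve. -/
def curv (γ : ℝ → ℝ × ℝ) (s : ℝ) : ℝ :=
  (deriv γ s).1 * (d2 γ s).2 - (deriv γ s).2 * (d2 γ s).1

/-- Euclidean inner product on `ℝ²`. -/
def dot (v w : ℝ × ℝ) : ℝ := v.1 * w.1 + v.2 * w.2

/-- Squared Euclidean norm on `ℝ²`. -/
def nsq (v : ℝ × ℝ) : ℝ := v.1 ^ 2 + v.2 ^ 2

namespace Stmt3Aux
open Topology


lemma hda_fst {f : ℝ → ℝ × ℝ} {v : ℝ × ℝ} {t : ℝ} (h : HasDerivAt f v t) :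
    HasDerivAt (fun u => (f u).1) v.1 t := by
  exact ((hasFDerivAt_fst.comp t h.hasFDerivAt).hasDerivAt).congr_deriv (by simp)

lemma hda_snd {f : ℝ → ℝ × ℝ} {v : ℝ × ℝ} {t : ℝ} (h : HasDerivAt f v t) :
    HasDerivAt (fun u => (f u).2) v.2 t := by
  exact ((hasFDerivAt_snd.comp t h.hasFDerivAt).hasDerivAt).congr_deriv (by simp)

variable {γ : ℝ → ℝ × ℝ}

/-- differentiability chain from C⁴ -/
lemma diff1 (hγ : ContDiff ℝ 4 γ) : Differentiable ℝ γ := hγ.differentiable (by norm_num)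

lemma cd3 (hγ : ContDiff ℝ 4 γ) : ContDiff ℝ 3 (deriv γ) := by
  rw [show (4 : WithTop ℕ∞) = 3 + 1 from rfl, contDiff_succ_iff_deriv] at hγ
  exact hγ.2.2

lemma diff2 (hγ : ContDiff ℝ 4 γ) : Differentiable ℝ (deriv γ) :=
  (cd3 hγ).differentiable (by norm_num)

lemma cd2 (hγ : ContDiff ℝ 4 γ) : ContDiff ℝ 2 (deriv (deriv γ)) := by
  have h := cd3 hγ
  rw [show (3 : WithTop ℕ∞) = 2 + 1 from rfl, contDiff_succ_iff_deriv] at h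
  exact h.2.2

lemma diff3 (hγ : ContDiff ℝ 4 γ) : Differentiable ℝ (deriv (deriv γ)) :=
  (cd2 hγ).differentiable (by norm_num)

lemma cd1 (hγ : ContDiff ℝ 4 γ) : ContDiff ℝ 1 (deriv (deriv (deriv γ))) := by
  have h := cd2 hγ
  rw [show (2 : WithTop ℕ∞) = 1 + 1 from rfl, contDiff_succ_iff_deriv] at h
  exact h.2.2

lemma diff4 (hγ : ContDiff ℝ 4 γ) : Differentiable ℝ (deriv (deriv (deriv γ))) :=
  (cd1 hγ).differentiable (by norm_num)

lemma d2_eq (hγ : ContDiff ℝ 4 γ) (t : ℝ) : d2 γ t = deriv (deriv γ) t := by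
  have h := (diff2 hγ t).hasDerivAt
  exact Prod.ext (hda_fst h).deriv (hda_snd h).deriv

lemma curv_eq (hγ : ContDiff ℝ 4 γ) (t : ℝ) :
    curv γ t = (deriv γ t).1 * (deriv (deriv γ) t).2
      - (deriv γ t).2 * (deriv (deriv γ) t).1 := by
  rw [curv, d2_eq hγ]

/-- derivative of the curvature, globally -/
lemma hasDeriv_curv (hγ : ContDiff ℝ 4 γ) (t : ℝ) :
    HasDerivAt (curv γ)
      ((deriv γ t).1 * (deriv (deriv (deriv γ)) t).2
        - (deriv γ t).2 * (deriv (deriv (deriv γ)) t).1) t := by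
  have h1 := (diff1 hγ t).hasDerivAt
  have h2 := (diff2 hγ t).hasDerivAt
  have h3 := (diff3 hγ t).hasDerivAt
  have H : HasDerivAt (fun u => (deriv γ u).1 * (deriv (deriv γ) u).2
      - (deriv γ u).2 * (deriv (deriv γ) u).1)
      ((deriv (deriv γ) t).1 * (deriv (deriv γ) t).2 + (deriv γ t).1 * (deriv (deriv (deriv γ)) t).2
        - ((deriv (deriv γ) t).2 * (deriv (deriv γ) t).1 + (deriv γ t).2 * (deriv (deriv (deriv γ)) t).1)) t :=
    (((hda_fst h2).mul (hda_snd h3)).sub ((hda_snd h2).mul (hda_fst h3)))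
  have He : curv γ = fun u => (deriv γ u).1 * (deriv (deriv γ) u).2
      - (deriv γ u).2 * (deriv (deriv γ) u).1 := funext fun u => curv_eq hγ u
  rw [He]
  convert H using 1
  ring

lemma deriv_curv_eq (hγ : ContDiff ℝ 4 γ) (t : ℝ) :
    deriv (curv γ) t = (deriv γ t).1 * (deriv (deriv (deriv γ)) t).2
      - (deriv γ t).2 * (deriv (deriv (deriv γ)) t).1 := (hasDeriv_curv hγ t).deriv

lemma hasDeriv_deriv_curv (hγ : ContDiff ℝ 4 γ) (t : ℝ) :
    HasDerivAt (deriv (curv γ))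
      ((deriv (deriv γ) t).1 * (deriv (deriv (deriv γ)) t).2
        - (deriv (deriv γ) t).2 * (deriv (deriv (deriv γ)) t).1
        + ((deriv γ t).1 * (deriv (deriv (deriv (deriv γ))) t).2
        - (deriv γ t).2 * (deriv (deriv (deriv (deriv γ))) t).1)) t := by
  have h2 := (diff2 hγ t).hasDerivAt
  have h3 := (diff3 hγ t).hasDerivAt
  have h4 := (diff4 hγ t).hasDerivAt
  have He : deriv (curv γ) = fun u => (deriv γ u).1 * (deriv (deriv (deriv γ)) u).2
      - (deriv γ u).2 * (deriv (deriv (deriv γ)) u).1 := funext fun u => deriv_curv_eq hγ u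
  rw [He]
  have h1 := (diff1 hγ t).hasDerivAt
  have H : HasDerivAt (fun u => (deriv γ u).1 * (deriv (deriv (deriv γ)) u).2
      - (deriv γ u).2 * (deriv (deriv (deriv γ)) u).1)
      ((deriv (deriv γ) t).1 * (deriv (deriv (deriv γ)) t).2
        + (deriv γ t).1 * (deriv (deriv (deriv (deriv γ))) t).2
        - ((deriv (deriv γ) t).2 * (deriv (deriv (deriv γ)) t).1
        + (deriv γ t).2 * (deriv (deriv (deriv (deriv γ))) t).1)) t := by
    exact ((hda_fst h2).mul (hda_snd h4)).sub ((hda_snd h2).mul (hda_fst h4))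
  convert H using 1
  ring


variable {γ : ℝ → ℝ × ℝ} {L : ℝ}


lemma udiff (hL : 0 < L) {t : ℝ} (ht : t ∈ Icc 0 L) : UniqueDiffWithinAt ℝ (Icc 0 L) t :=
  (uniqueDiffOn_Icc hL) t ht

/-- E1 -/
lemma E1 (hunit : ∀ s ∈ Icc 0 L, nsq (deriv γ s) = 1) {t : ℝ} (ht : t ∈ Icc 0 L) :
    (deriv γ t).1 ^ 2 + (deriv γ t).2 ^ 2 = 1 := hunit t ht

/-- E2 : γ'·γ'' = 0 on the interval -/
lemma E2 (hγ : ContDiff ℝ 4 γ) (hL : 0 < L)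
    (hunit : ∀ s ∈ Icc 0 L, nsq (deriv γ s) = 1) {t : ℝ} (ht : t ∈ Icc 0 L) :
    (deriv γ t).1 * (deriv (deriv γ) t).1 + (deriv γ t).2 * (deriv (deriv γ) t).2 = 0 := by
  have h2 := (diff2 hγ t).hasDerivAt
  have hF : HasDerivAt (fun u => nsq (deriv γ u))
      (2 * ((deriv γ t).1 * (deriv (deriv γ) t).1 + (deriv γ t).2 * (deriv (deriv γ) t).2)) t := by
    have := ((hda_fst h2).mul (hda_fst h2)).add ((hda_snd h2).mul (hda_snd h2))
    have h' : HasDerivAt (fun u => (deriv γ u).1 * (deriv γ u).1 + (deriv γ u).2 * (deriv γ u).2)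
      ((deriv (deriv γ) t).1 * (deriv γ t).1 + (deriv γ t).1 * (deriv (deriv γ) t).1 +
        ((deriv (deriv γ) t).2 * (deriv γ t).2 + (deriv γ t).2 * (deriv (deriv γ) t).2)) t := this
    have he : (fun u => nsq (deriv γ u))
        = fun u => (deriv γ u).1 * (deriv γ u).1 + (deriv γ u).2 * (deriv γ u).2 := by
      funext u; simp [nsq]; ring
    rw [he]
    convert h' using 1; ring
  have hud := udiff hL ht
  have h1 : derivWithin (fun u => nsq (deriv γ u)) (Icc 0 L) t
      = 2 * ((deriv γ t).1 * (deriv (deriv γ) t).1 + (deriv γ t).2 * (deriv (deriv γ) t).2) :=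
    hF.hasDerivWithinAt.derivWithin hud
  have h0 : derivWithin (fun u => nsq (deriv γ u)) (Icc 0 L) t = 0 := by
    have : derivWithin (fun u => nsq (deriv γ u)) (Icc 0 L) t
        = derivWithin (fun _ => (1:ℝ)) (Icc 0 L) t :=
      derivWithin_congr (fun x hx => hunit x hx) (hunit t ht)
    rw [this]; simp
  rw [h0] at h1
  linarith

/-- E3 -/
lemma E3 (hγ : ContDiff ℝ 4 γ) (hL : 0 < L)
    (hunit : ∀ s ∈ Icc 0 L, nsq (deriv γ s) = 1) {t : ℝ} (ht : t ∈ Icc 0 L) :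
    (deriv (deriv γ) t).1 = -(curv γ t) * (deriv γ t).2
      ∧ (deriv (deriv γ) t).2 = (curv γ t) * (deriv γ t).1 := by
  have hE1 := E1 hunit ht
  have hE2 := E2 hγ hL hunit ht
  have hk := curv_eq hγ t
  set a := (deriv γ t).1; set b := (deriv γ t).2
  set c := (deriv (deriv γ) t).1; set d := (deriv (deriv γ) t).2
  constructor
  · rw [hk]; linear_combination a * hE2 - c * hE1
  · rw [hk]; linear_combination b * hE2 - d * hE1

/-- E4 -/
lemma E4 (hγ : ContDiff ℝ 4 γ) (hL : 0 < L)
    (hunit : ∀ s ∈ Icc 0 L, nsq (deriv γ s) = 1) {t : ℝ} (ht : t ∈ Icc 0 L) :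
    (deriv (deriv (deriv γ)) t).1
        = -(deriv (curv γ) t) * (deriv γ t).2 - (curv γ t) * (deriv (deriv γ) t).2
      ∧ (deriv (deriv (deriv γ)) t).2
        = (deriv (curv γ) t) * (deriv γ t).1 + (curv γ t) * (deriv (deriv γ) t).1 := by
  have hud := udiff hL ht
  have h2 := (diff2 hγ t).hasDerivAt
  have h3 := (diff3 hγ t).hasDerivAt
  have hκ := (hasDeriv_curv hγ t).differentiableAt.hasDerivAt
  constructor
  · have hG : HasDerivAt (fun u => -(curv γ u) * (deriv γ u).2)
        (-(deriv (curv γ) t) * (deriv γ t).2 - (curv γ t) * (deriv (deriv γ) t).2) t := by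
      have := ((hκ).neg.mul (hda_snd h2))
      exact this.congr_deriv (by simp only [Pi.neg_apply]; ring)
    have e1 : derivWithin (fun u => (deriv (deriv γ) u).1) (Icc 0 L) t
        = (deriv (deriv (deriv γ)) t).1 := (hda_fst h3).hasDerivWithinAt.derivWithin hud
    have e2 : derivWithin (fun u => (deriv (deriv γ) u).1) (Icc 0 L) t
        = derivWithin (fun u => -(curv γ u) * (deriv γ u).2) (Icc 0 L) t := by
      apply derivWithin_congr
      · exact fun x hx => (E3 hγ hL hunit hx).1
      · exact (E3 hγ hL hunit ht).1
    have e3 : derivWithin (fun u => -(curv γ u) * (deriv γ u).2) (Icc 0 L) t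
        = -(deriv (curv γ) t) * (deriv γ t).2 - (curv γ t) * (deriv (deriv γ) t).2 :=
      hG.hasDerivWithinAt.derivWithin hud
    rw [← e1, e2, e3]
  · have hG : HasDerivAt (fun u => (curv γ u) * (deriv γ u).1)
        ((deriv (curv γ) t) * (deriv γ t).1 + (curv γ t) * (deriv (deriv γ) t).1) t :=
      (hκ).mul (hda_fst h2)
    have e1 : derivWithin (fun u => (deriv (deriv γ) u).2) (Icc 0 L) t
        = (deriv (deriv (deriv γ)) t).2 := (hda_snd h3).hasDerivWithinAt.derivWithin hud
    have e2 : derivWithin (fun u => (deriv (deriv γ) u).2) (Icc 0 L) t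
        = derivWithin (fun u => (curv γ u) * (deriv γ u).1) (Icc 0 L) t := by
      apply derivWithin_congr
      · exact fun x hx => (E3 hγ hL hunit hx).2
      · exact (E3 hγ hL hunit ht).2
    have e3 : derivWithin (fun u => (curv γ u) * (deriv γ u).1) (Icc 0 L) t
        = (deriv (curv γ) t) * (deriv γ t).1 + (curv γ t) * (deriv (deriv γ) t).1 :=
      hG.hasDerivWithinAt.derivWithin hud
    rw [← e1, e2, e3]

/-- E5 -/
lemma E5 (hγ : ContDiff ℝ 4 γ) (hL : 0 < L)
    (hunit : ∀ s ∈ Icc 0 L, nsq (deriv γ s) = 1) {t : ℝ} (ht : t ∈ Icc 0 L) :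
    (deriv (deriv (deriv (deriv γ))) t).1
        = -(deriv (deriv (curv γ)) t) * (deriv γ t).2
          - 2 * (deriv (curv γ) t) * (deriv (deriv γ) t).2
          - (curv γ t) * (deriv (deriv (deriv γ)) t).2
      ∧ (deriv (deriv (deriv (deriv γ))) t).2
        = (deriv (deriv (curv γ)) t) * (deriv γ t).1
          + 2 * (deriv (curv γ) t) * (deriv (deriv γ) t).1
          + (curv γ t) * (deriv (deriv (deriv γ)) t).1 := by
  have hud := udiff hL ht
  have h2 := (diff2 hγ t).hasDerivAt
  have h3 := (diff3 hγ t).hasDerivAt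
  have h4 := (diff4 hγ t).hasDerivAt
  have hκ := (hasDeriv_curv hγ t).differentiableAt.hasDerivAt
  have hκ' := (hasDeriv_deriv_curv hγ t).differentiableAt.hasDerivAt
  constructor
  · have hG : HasDerivAt (fun u => -(deriv (curv γ) u) * (deriv γ u).2
          - (curv γ u) * (deriv (deriv γ) u).2)
        (-(deriv (deriv (curv γ)) t) * (deriv γ t).2
          - 2 * (deriv (curv γ) t) * (deriv (deriv γ) t).2
          - (curv γ t) * (deriv (deriv (deriv γ)) t).2) t := by
      have := ((hκ').neg.mul (hda_snd h2)).sub ((hκ).mul (hda_snd h3))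
      exact this.congr_deriv (by simp only [Pi.neg_apply]; ring)
    have e1 : derivWithin (fun u => (deriv (deriv (deriv γ)) u).1) (Icc 0 L) t
        = (deriv (deriv (deriv (deriv γ))) t).1 := (hda_fst h4).hasDerivWithinAt.derivWithin hud
    have e2 : derivWithin (fun u => (deriv (deriv (deriv γ)) u).1) (Icc 0 L) t
        = derivWithin (fun u => -(deriv (curv γ) u) * (deriv γ u).2
            - (curv γ u) * (deriv (deriv γ) u).2) (Icc 0 L) t := by
      apply derivWithin_congr
      · exact fun x hx => (E4 hγ hL hunit hx).1
      · exact (E4 hγ hL hunit ht).1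
    rw [← e1, e2, hG.hasDerivWithinAt.derivWithin hud]
  · have hG : HasDerivAt (fun u => (deriv (curv γ) u) * (deriv γ u).1
          + (curv γ u) * (deriv (deriv γ) u).1)
        ((deriv (deriv (curv γ)) t) * (deriv γ t).1
          + 2 * (deriv (curv γ) t) * (deriv (deriv γ) t).1
          + (curv γ t) * (deriv (deriv (deriv γ)) t).1) t := by
      have := ((hκ').mul (hda_fst h2)).add ((hκ).mul (hda_fst h3))
      exact this.congr_deriv (by ring)
    have e1 : derivWithin (fun u => (deriv (deriv (deriv γ)) u).2) (Icc 0 L) t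
        = (deriv (deriv (deriv (deriv γ))) t).2 := (hda_snd h4).hasDerivWithinAt.derivWithin hud
    have e2 : derivWithin (fun u => (deriv (deriv (deriv γ)) u).2) (Icc 0 L) t
        = derivWithin (fun u => (deriv (curv γ) u) * (deriv γ u).1
            + (curv γ u) * (deriv (deriv γ) u).1) (Icc 0 L) t := by
      apply derivWithin_congr
      · exact fun x hx => (E4 hγ hL hunit hx).2
      · exact (E4 hγ hL hunit ht).2
    rw [← e1, e2, hG.hasDerivWithinAt.derivWithin hud]



lemma abs_mul_le {x y X Y : ℝ} (hx : |x| ≤ X) (hy : |y| ≤ Y) : |x * y| ≤ X * Y := by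
  rw [abs_mul]
  exact mul_le_mul hx hy (abs_nonneg _) (le_trans (abs_nonneg _) hx)

lemma mono_step {φ ψ : ℝ → ℝ} {x y : ℝ}
    (hd : ∀ t ∈ Icc x y, HasDerivAt φ (ψ t) t) (hψ : ∀ t ∈ Icc x y, 0 ≤ ψ t) :
    MonotoneOn φ (Icc x y) := by
  apply monotoneOn_of_deriv_nonneg (convex_Icc x y)
  · exact fun t ht => (hd t ht).continuousAt.continuousWithinAt
  · intro t ht
    have ht' : t ∈ Icc x y := interior_subset ht
    exact (hd t ht').differentiableAt.differentiableWithinAt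
  · intro t ht
    have ht' : t ∈ Icc x y := interior_subset ht
    rw [(hd t ht').deriv]
    exact hψ t ht'

lemma anti_step {φ ψ : ℝ → ℝ} {x y : ℝ}
    (hd : ∀ t ∈ Icc x y, HasDerivAt φ (ψ t) t) (hψ : ∀ t ∈ Icc x y, ψ t ≤ 0) :
    AntitoneOn φ (Icc x y) := by
  apply antitoneOn_of_deriv_nonpos (convex_Icc x y)
  · exact fun t ht => (hd t ht).continuousAt.continuousWithinAt
  · intro t ht
    have ht' : t ∈ Icc x y := interior_subset ht
    exact (hd t ht').differentiableAt.differentiableWithinAt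
  · intro t ht
    have ht' : t ∈ Icc x y := interior_subset ht
    rw [(hd t ht').deriv]
    exact hψ t ht'

lemma taylor4_right {f0 f1 f2 f3 f4 : ℝ → ℝ} {s h M : ℝ} (hh : 0 ≤ h)
    (hd0 : ∀ t ∈ Icc s (s+h), HasDerivAt f0 (f1 t) t)
    (hd1 : ∀ t ∈ Icc s (s+h), HasDerivAt f1 (f2 t) t)
    (hd2 : ∀ t ∈ Icc s (s+h), HasDerivAt f2 (f3 t) t)
    (hd3 : ∀ t ∈ Icc s (s+h), HasDerivAt f3 (f4 t) t)
    (h0 : f0 s = 0) (h1 : f1 s = 0)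
    (hM : ∀ t ∈ Icc s (s+h), f4 t ≤ M) :
    f0 (s+h) ≤ f2 s * h^2/2 + f3 s * h^3/6 + M*h^4/24 := by
  have hss : s ∈ Icc s (s+h) := ⟨le_refl s, by linarith⟩
  have hsh : s + h ∈ Icc s (s+h) := ⟨by linarith, le_refl _⟩
  have hu3 : ∀ t ∈ Icc s (s+h), f3 t - f3 s - M*(t-s) ≤ 0 := by
    have ha : AntitoneOn (fun t => f3 t - f3 s - M*(t-s)) (Icc s (s+h)) := by
      apply anti_step (ψ := fun t => f4 t - M)
      · intro t ht
        have h1' : HasDerivAt (fun t => f3 t - f3 s - M*(t-s)) (f4 t - M*1) t :=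
          ((hd3 t ht).sub_const _).sub (((hasDerivAt_id t).sub_const s).const_mul M)
        exact h1'.congr_deriv (by ring)
      · exact fun t ht => by linarith [hM t ht]
    intro t ht
    have h' := ha hss ht ht.1
    simp only [] at h'
    have hv : f3 s - f3 s - M*(s-s) = 0 := by ring
    linarith
  have hu2 : ∀ t ∈ Icc s (s+h), f2 t - f2 s - f3 s * (t-s) - M*(t-s)^2/2 ≤ 0 := by
    have ha : AntitoneOn (fun t => f2 t - f2 s - f3 s * (t-s) - M*(t-s)^2/2) (Icc s (s+h)) := by
      apply anti_step (ψ := fun t => f3 t - f3 s - M*(t-s))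
      · intro t ht
        have h1' : HasDerivAt (fun t => f2 t - f2 s - f3 s * (t-s) - M*(t-s)^2/2)
            (f3 t - f3 s * 1 - (M * (2*(t-s)^1*1))/2) t :=
          (((hd2 t ht).sub_const _).sub
            (((hasDerivAt_id t).sub_const s).const_mul (f3 s))).sub
            ((((hasDerivAt_id t).sub_const s).pow 2).const_mul M |>.div_const 2)
        exact h1'.congr_deriv (by ring)
      · exact hu3
    intro t ht
    have h' := ha hss ht ht.1
    simp only [] at h'
    have hv : f2 s - f2 s - f3 s*(s-s) - M*(s-s)^2/2 = 0 := by ring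
    linarith
  have hu1 : ∀ t ∈ Icc s (s+h),
      f1 t - f2 s * (t-s) - f3 s * (t-s)^2/2 - M*(t-s)^3/6 ≤ 0 := by
    have ha : AntitoneOn (fun t => f1 t - f2 s * (t-s) - f3 s * (t-s)^2/2 - M*(t-s)^3/6)
        (Icc s (s+h)) := by
      apply anti_step (ψ := fun t => f2 t - f2 s - f3 s * (t-s) - M*(t-s)^2/2)
      · intro t ht
        have h1' : HasDerivAt (fun t => f1 t - f2 s * (t-s) - f3 s * (t-s)^2/2 - M*(t-s)^3/6)
            (f2 t - f2 s * 1 - (f3 s * (2*(t-s)^1*1))/2 - (M * (3*(t-s)^2*1))/6) t :=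
          ((((hd1 t ht).sub (((hasDerivAt_id t).sub_const s).const_mul (f2 s))).sub
            ((((hasDerivAt_id t).sub_const s).pow 2).const_mul (f3 s) |>.div_const 2)).sub
            ((((hasDerivAt_id t).sub_const s).pow 3).const_mul M |>.div_const 6))
        exact h1'.congr_deriv (by ring)
      · exact hu2
    intro t ht
    have h' := ha hss ht ht.1
    simp only [] at h'
    have hv : f1 s - f2 s*(s-s) - f3 s*(s-s)^2/2 - M*(s-s)^3/6 = 0 := by rw [h1]; ring
    linarith
  have hu0 : f0 (s+h) - f2 s * h^2/2 - f3 s * h^3/6 - M*h^4/24 ≤ 0 := by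
    have ha : AntitoneOn
        (fun t => f0 t - f2 s * (t-s)^2/2 - f3 s * (t-s)^3/6 - M*(t-s)^4/24) (Icc s (s+h)) := by
      apply anti_step (ψ := fun t => f1 t - f2 s * (t-s) - f3 s * (t-s)^2/2 - M*(t-s)^3/6)
      · intro t ht
        have h1' : HasDerivAt
            (fun t => f0 t - f2 s * (t-s)^2/2 - f3 s * (t-s)^3/6 - M*(t-s)^4/24)
            (f1 t - (f2 s * (2*(t-s)^1*1))/2 - (f3 s * (3*(t-s)^2*1))/6
              - (M * (4*(t-s)^3*1))/24) t :=
          ((((hd0 t ht).sub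
            ((((hasDerivAt_id t).sub_const s).pow 2).const_mul (f2 s) |>.div_const 2)).sub
            ((((hasDerivAt_id t).sub_const s).pow 3).const_mul (f3 s) |>.div_const 6)).sub
            ((((hasDerivAt_id t).sub_const s).pow 4).const_mul M |>.div_const 24))
        exact h1'.congr_deriv (by ring)
      · exact hu1
    have h' := ha hss hsh (by linarith : s ≤ s + h)
    simp only [] at h'
    have hv : f0 s - f2 s*(s-s)^2/2 - f3 s*(s-s)^3/6 - M*(s-s)^4/24 = 0 := by rw [h0]; ring
    have he : s + h - s = h := by ring
    rw [he] at h'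
    linarith
  linarith

lemma taylor4_left {f0 f1 f2 f3 f4 : ℝ → ℝ} {s h M : ℝ} (hh : 0 ≤ h)
    (hd0 : ∀ t ∈ Icc (s-h) s, HasDerivAt f0 (f1 t) t)
    (hd1 : ∀ t ∈ Icc (s-h) s, HasDerivAt f1 (f2 t) t)
    (hd2 : ∀ t ∈ Icc (s-h) s, HasDerivAt f2 (f3 t) t)
    (hd3 : ∀ t ∈ Icc (s-h) s, HasDerivAt f3 (f4 t) t)
    (h0 : f0 s = 0) (h1 : f1 s = 0)
    (hM : ∀ t ∈ Icc (s-h) s, f4 t ≤ M) :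
    f0 (s-h) ≤ f2 s * h^2/2 - f3 s * h^3/6 + M*h^4/24 := by
  have hss : s ∈ Icc (s-h) s := ⟨by linarith, le_refl s⟩
  have hsh : s - h ∈ Icc (s-h) s := ⟨le_refl _, by linarith⟩
  have hu3 : ∀ t ∈ Icc (s-h) s, 0 ≤ f3 t - f3 s - M*(t-s) := by
    have ha : AntitoneOn (fun t => f3 t - f3 s - M*(t-s)) (Icc (s-h) s) := by
      apply anti_step (ψ := fun t => f4 t - M)
      · intro t ht
        have h1' : HasDerivAt (fun t => f3 t - f3 s - M*(t-s)) (f4 t - M*1) t :=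
          ((hd3 t ht).sub_const _).sub (((hasDerivAt_id t).sub_const s).const_mul M)
        exact h1'.congr_deriv (by ring)
      · exact fun t ht => by linarith [hM t ht]
    intro t ht
    have h' := ha ht hss ht.2
    simp only [] at h'
    have hv : f3 s - f3 s - M*(s-s) = 0 := by ring
    linarith
  have hu2 : ∀ t ∈ Icc (s-h) s, f2 t - f2 s - f3 s * (t-s) - M*(t-s)^2/2 ≤ 0 := by
    have ha : MonotoneOn (fun t => f2 t - f2 s - f3 s * (t-s) - M*(t-s)^2/2) (Icc (s-h) s) := by
      apply mono_step (ψ := fun t => f3 t - f3 s - M*(t-s))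
      · intro t ht
        have h1' : HasDerivAt (fun t => f2 t - f2 s - f3 s * (t-s) - M*(t-s)^2/2)
            (f3 t - f3 s * 1 - (M * (2*(t-s)^1*1))/2) t :=
          (((hd2 t ht).sub_const _).sub
            (((hasDerivAt_id t).sub_const s).const_mul (f3 s))).sub
            ((((hasDerivAt_id t).sub_const s).pow 2).const_mul M |>.div_const 2)
        exact h1'.congr_deriv (by ring)
      · exact hu3
    intro t ht
    have h' := ha ht hss ht.2
    simp only [] at h'
    have hv : f2 s - f2 s - f3 s*(s-s) - M*(s-s)^2/2 = 0 := by ring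
    linarith
  have hu1 : ∀ t ∈ Icc (s-h) s,
      0 ≤ f1 t - f2 s * (t-s) - f3 s * (t-s)^2/2 - M*(t-s)^3/6 := by
    have ha : AntitoneOn (fun t => f1 t - f2 s * (t-s) - f3 s * (t-s)^2/2 - M*(t-s)^3/6)
        (Icc (s-h) s) := by
      apply anti_step (ψ := fun t => f2 t - f2 s - f3 s * (t-s) - M*(t-s)^2/2)
      · intro t ht
        have h1' : HasDerivAt (fun t => f1 t - f2 s * (t-s) - f3 s * (t-s)^2/2 - M*(t-s)^3/6)
            (f2 t - f2 s * 1 - (f3 s * (2*(t-s)^1*1))/2 - (M * (3*(t-s)^2*1))/6) t :=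
          ((((hd1 t ht).sub (((hasDerivAt_id t).sub_const s).const_mul (f2 s))).sub
            ((((hasDerivAt_id t).sub_const s).pow 2).const_mul (f3 s) |>.div_const 2)).sub
            ((((hasDerivAt_id t).sub_const s).pow 3).const_mul M |>.div_const 6))
        exact h1'.congr_deriv (by ring)
      · exact hu2
    intro t ht
    have h' := ha ht hss ht.2
    simp only [] at h'
    have hv : f1 s - f2 s*(s-s) - f3 s*(s-s)^2/2 - M*(s-s)^3/6 = 0 := by rw [h1]; ring
    linarith
  have hu0 : f0 (s-h) - f2 s * h^2/2 + f3 s * h^3/6 - M*h^4/24 ≤ 0 := by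
    have ha : MonotoneOn
        (fun t => f0 t - f2 s * (t-s)^2/2 - f3 s * (t-s)^3/6 - M*(t-s)^4/24) (Icc (s-h) s) := by
      apply mono_step (ψ := fun t => f1 t - f2 s * (t-s) - f3 s * (t-s)^2/2 - M*(t-s)^3/6)
      · intro t ht
        have h1' : HasDerivAt
            (fun t => f0 t - f2 s * (t-s)^2/2 - f3 s * (t-s)^3/6 - M*(t-s)^4/24)
            (f1 t - (f2 s * (2*(t-s)^1*1))/2 - (f3 s * (3*(t-s)^2*1))/6
              - (M * (4*(t-s)^3*1))/24) t :=
          ((((hd0 t ht).sub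
            ((((hasDerivAt_id t).sub_const s).pow 2).const_mul (f2 s) |>.div_const 2)).sub
            ((((hasDerivAt_id t).sub_const s).pow 3).const_mul (f3 s) |>.div_const 6)).sub
            ((((hasDerivAt_id t).sub_const s).pow 4).const_mul M |>.div_const 24))
        exact h1'.congr_deriv (by ring)
      · exact hu1
    have h' := ha hsh hss (by linarith : s - h ≤ s)
    simp only [] at h'
    have hv : f0 s - f2 s*(s-s)^2/2 - f3 s*(s-s)^3/6 - M*(s-s)^4/24 = 0 := by rw [h0]; ring
    have he : s - h - s = -h := by ring
    rw [he] at h'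
    have e2 : (-h)^2 = h^2 := by ring
    have e3 : (-h)^3 = -h^3 := by ring
    have e4 : (-h)^4 = h^4 := by ring
    rw [e2, e3, e4] at h'
    linarith
  linarith


lemma abs_add_le' {x y X Y : ℝ} (hx : |x| ≤ X) (hy : |y| ≤ Y) : |x + y| ≤ X + Y :=
  le_trans (abs_add_le x y) (add_le_add hx hy)

lemma abs_sub_le' {x y X Y : ℝ} (hx : |x| ≤ X) (hy : |y| ≤ Y) : |x - y| ≤ X + Y :=
  le_trans (abs_sub x y) (add_le_add hx hy)

variable {Θ Csharp : ℝ}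

/-- componentwise Lipschitz bound for γ on the interval -/
lemma lip_comp (hγ : ContDiff ℝ 4 γ) (hL : 0 < L)
    (hunit : ∀ s ∈ Icc 0 L, nsq (deriv γ s) = 1) {x y : ℝ}
    (hx : x ∈ Icc 0 L) (hy : y ∈ Icc 0 L) :
    |(γ x).1 - (γ y).1| ≤ |x - y| ∧ |(γ x).2 - (γ y).2| ≤ |x - y| := by
  constructor
  · have := Convex.norm_image_sub_le_of_norm_derivWithin_le (𝕜 := ℝ)
      (f := fun u => (γ u).1) (s := Icc 0 L) (C := 1)
      (fun t ht => (hda_fst (diff1 hγ t).hasDerivAt).differentiableAt.differentiableWithinAt)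
      (fun t ht => by
        rw [(hda_fst (diff1 hγ t).hasDerivAt).hasDerivWithinAt.derivWithin (udiff hL ht)]
        have h1 := E1 hunit ht
        rw [Real.norm_eq_abs]
        nlinarith [abs_nonneg (deriv γ t).1, sq_abs (deriv γ t).1, sq_nonneg (deriv γ t).2,
          sq_nonneg (|(deriv γ t).1| - 1)])
      (convex_Icc 0 L) hy hx
    simpa [Real.norm_eq_abs] using this
  · have := Convex.norm_image_sub_le_of_norm_derivWithin_le (𝕜 := ℝ)
      (f := fun u => (γ u).2) (s := Icc 0 L) (C := 1)
      (fun t ht => (hda_snd (diff1 hγ t).hasDerivAt).differentiableAt.differentiableWithinAt)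
      (fun t ht => by
        rw [(hda_snd (diff1 hγ t).hasDerivAt).hasDerivWithinAt.derivWithin (udiff hL ht)]
        have h1 := E1 hunit ht
        rw [Real.norm_eq_abs]
        nlinarith [abs_nonneg (deriv γ t).2, sq_abs (deriv γ t).2, sq_nonneg (deriv γ t).1,
          sq_nonneg (|(deriv γ t).2| - 1)])
      (convex_Icc 0 L) hy hx
    simpa [Real.norm_eq_abs] using this

/-- all component bounds at a point where `κ + 2Θ ≤ Q`. -/
lemma comp_bounds (hγ : ContDiff ℝ 4 γ) (hL : 0 < L) (hΘ : 0 < Θ) (hC : 0 < Csharp)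
    (hunit : ∀ s ∈ Icc 0 L, nsq (deriv γ s) = 1)
    (hκpos : ∀ s ∈ Icc 0 L, 0 < curv γ s)
    (hκ' : ∀ s ∈ Icc 0 L, |deriv (curv γ) s| ≤ Csharp * (curv γ s + 2 * Θ) ^ 2)
    (hκ'' : ∀ s ∈ Icc 0 L, |deriv (deriv (curv γ)) s| ≤ Csharp * (curv γ s + 2 * Θ) ^ 3)
    {Q t : ℝ} (ht : t ∈ Icc 0 L) (hQ : curv γ t + 2 * Θ ≤ Q) :
    |(deriv γ t).1| ≤ 1 ∧ |(deriv γ t).2| ≤ 1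
      ∧ |(deriv (deriv γ) t).1| ≤ Q ∧ |(deriv (deriv γ) t).2| ≤ Q
      ∧ |(deriv (deriv (deriv γ)) t).1| ≤ (Csharp + 1) * Q ^ 2
      ∧ |(deriv (deriv (deriv γ)) t).2| ≤ (Csharp + 1) * Q ^ 2
      ∧ |(deriv (deriv (deriv (deriv γ))) t).1| ≤ (4 * Csharp + 1) * Q ^ 3
      ∧ |(deriv (deriv (deriv (deriv γ))) t).2| ≤ (4 * Csharp + 1) * Q ^ 3 := by
  have hE1 := E1 hunit ht
  have hk := hκpos t ht
  have hkQ : curv γ t ≤ Q := by linarith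
  have hQ0 : 0 < Q := by linarith
  have ha : |(deriv γ t).1| ≤ 1 := by
    rw [abs_le]; constructor <;> nlinarith [sq_nonneg (deriv γ t).2]
  have hb : |(deriv γ t).2| ≤ 1 := by
    rw [abs_le]; constructor <;> nlinarith [sq_nonneg (deriv γ t).1]
  have hkabs : |curv γ t| ≤ Q := by rw [abs_of_pos hk]; exact hkQ
  have hsq : (curv γ t + 2 * Θ) ^ 2 ≤ Q ^ 2 := by nlinarith
  have hcube : (curv γ t + 2 * Θ) ^ 3 ≤ Q ^ 3 := by nlinarith
  have hk' : |deriv (curv γ) t| ≤ Csharp * Q ^ 2 :=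
    le_trans (hκ' t ht) (mul_le_mul_of_nonneg_left hsq hC.le)
  have hk'' : |deriv (deriv (curv γ)) t| ≤ Csharp * Q ^ 3 :=
    le_trans (hκ'' t ht) (mul_le_mul_of_nonneg_left hcube hC.le)
  have hE3 := E3 hγ hL hunit ht
  have hc1 : |(deriv (deriv γ) t).1| ≤ Q := by
    rw [hE3.1]
    have := abs_mul_le (x := -curv γ t) (X := Q) (by rwa [abs_neg]) hb
    simpa using this
  have hc2 : |(deriv (deriv γ) t).2| ≤ Q := by
    rw [hE3.2]
    have := abs_mul_le hkabs ha
    simpa using this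
  have hE4 := E4 hγ hL hunit ht
  have hd1 : |(deriv (deriv (deriv γ)) t).1| ≤ (Csharp + 1) * Q ^ 2 := by
    rw [hE4.1]
    have h1 : |(-deriv (curv γ) t) * (deriv γ t).2| ≤ (Csharp * Q ^ 2) * 1 :=
      abs_mul_le (by rwa [abs_neg]) hb
    have h2 : |curv γ t * (deriv (deriv γ) t).2| ≤ Q * Q := abs_mul_le hkabs hc2
    exact le_trans (abs_sub_le' h1 h2) (le_of_eq (by ring))
  have hd2 : |(deriv (deriv (deriv γ)) t).2| ≤ (Csharp + 1) * Q ^ 2 := by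
    rw [hE4.2]
    have h1 : |deriv (curv γ) t * (deriv γ t).1| ≤ (Csharp * Q ^ 2) * 1 := abs_mul_le hk' ha
    have h2 : |curv γ t * (deriv (deriv γ) t).1| ≤ Q * Q := abs_mul_le hkabs hc1
    exact le_trans (abs_add_le' h1 h2) (le_of_eq (by ring))
  have hE5 := E5 hγ hL hunit ht
  refine ⟨ha, hb, hc1, hc2, hd1, hd2, ?_, ?_⟩
  · rw [hE5.1]
    have h1 : |(-deriv (deriv (curv γ)) t) * (deriv γ t).2| ≤ (Csharp * Q ^ 3) * 1 :=
      abs_mul_le (by rwa [abs_neg]) hb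
    have h2 : |2 * deriv (curv γ) t * (deriv (deriv γ) t).2| ≤ (2 * (Csharp * Q ^ 2)) * Q := by
      have : |2 * deriv (curv γ) t| ≤ 2 * (Csharp * Q ^ 2) := by
        rw [abs_mul, abs_two]; linarith [hk']
      exact abs_mul_le this hc2
    have h3 : |curv γ t * (deriv (deriv (deriv γ)) t).2| ≤ Q * ((Csharp + 1) * Q ^ 2) :=
      abs_mul_le hkabs hd2
    exact le_trans (abs_sub_le' (abs_sub_le' h1 h2) h3) (le_of_eq (by ring))
  · rw [hE5.2]
    have h1 : |deriv (deriv (curv γ)) t * (deriv γ t).1| ≤ (Csharp * Q ^ 3) * 1 :=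
      abs_mul_le hk'' ha
    have h2 : |2 * deriv (curv γ) t * (deriv (deriv γ) t).1| ≤ (2 * (Csharp * Q ^ 2)) * Q := by
      have : |2 * deriv (curv γ) t| ≤ 2 * (Csharp * Q ^ 2) := by
        rw [abs_mul, abs_two]; linarith [hk']
      exact abs_mul_le this hc1
    have h3 : |curv γ t * (deriv (deriv (deriv γ)) t).1| ≤ Q * ((Csharp + 1) * Q ^ 2) :=
      abs_mul_le hkabs hd1
    exact le_trans (abs_add_le' (abs_add_le' h1 h2) h3) (le_of_eq (by ring))

/-- the inscribed-radius comparison function and its `t`-derivatives -/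
def Ff0 (γ : ℝ → ℝ × ℝ) (c s : ℝ) : ℝ → ℝ := fun t =>
  c * curv γ s / 2 * nsq (γ s - γ t) - dot (γ s - γ t) (nor γ s)

def Ff1 (γ : ℝ → ℝ × ℝ) (c s : ℝ) : ℝ → ℝ := fun t =>
  c * curv γ s * (-(((γ s).1 - (γ t).1) * (deriv γ t).1)
      - ((γ s).2 - (γ t).2) * (deriv γ t).2)
    + ((deriv γ t).1 * (deriv γ s).2 + (deriv γ t).2 * (-(deriv γ s).1))

def Ff2 (γ : ℝ → ℝ × ℝ) (c s : ℝ) : ℝ → ℝ := fun t =>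
  c * curv γ s * ((deriv γ t).1 ^ 2 + (deriv γ t).2 ^ 2
      - (((γ s).1 - (γ t).1) * (deriv (deriv γ) t).1
        + ((γ s).2 - (γ t).2) * (deriv (deriv γ) t).2))
    + ((deriv (deriv γ) t).1 * (deriv γ s).2 + (deriv (deriv γ) t).2 * (-(deriv γ s).1))

def Ff3 (γ : ℝ → ℝ × ℝ) (c s : ℝ) : ℝ → ℝ := fun t =>
  c * curv γ s * (3 * ((deriv γ t).1 * (deriv (deriv γ) t).1
        + (deriv γ t).2 * (deriv (deriv γ) t).2)
      - (((γ s).1 - (γ t).1) * (deriv (deriv (deriv γ)) t).1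
        + ((γ s).2 - (γ t).2) * (deriv (deriv (deriv γ)) t).2))
    + ((deriv (deriv (deriv γ)) t).1 * (deriv γ s).2
      + (deriv (deriv (deriv γ)) t).2 * (-(deriv γ s).1))

def Ff4 (γ : ℝ → ℝ × ℝ) (c s : ℝ) : ℝ → ℝ := fun t =>
  c * curv γ s * (3 * ((deriv (deriv γ) t).1 ^ 2 + (deriv (deriv γ) t).2 ^ 2)
      + 4 * ((deriv γ t).1 * (deriv (deriv (deriv γ)) t).1
        + (deriv γ t).2 * (deriv (deriv (deriv γ)) t).2)
      - (((γ s).1 - (γ t).1) * (deriv (deriv (deriv (deriv γ))) t).1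
        + ((γ s).2 - (γ t).2) * (deriv (deriv (deriv (deriv γ))) t).2))
    + ((deriv (deriv (deriv (deriv γ))) t).1 * (deriv γ s).2
      + (deriv (deriv (deriv (deriv γ))) t).2 * (-(deriv γ s).1))

def Bc (C Q : ℝ) : ℝ := (4 * C + 1) * Q ^ 3
def Mc (C Q : ℝ) : ℝ := 2 * Q * ((14 + 8 * C) * Q ^ 2 + 2 * Bc C Q) + 2 * Bc C Q

lemma hasFf0 (hγ : ContDiff ℝ 4 γ) (c s t : ℝ) :
    HasDerivAt (Ff0 γ c s) (Ff1 γ c s t) t := by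
  have h1 := (diff1 hγ t).hasDerivAt
  have hw1 : HasDerivAt (fun u => (γ s).1 - (γ u).1) (-(deriv γ t).1) t :=
    (hda_fst h1).const_sub _
  have hw2 : HasDerivAt (fun u => (γ s).2 - (γ u).2) (-(deriv γ t).2) t :=
    (hda_snd h1).const_sub _
  have He : Ff0 γ c s = fun u =>
      c * curv γ s / 2 * (((γ s).1 - (γ u).1) ^ 2 + ((γ s).2 - (γ u).2) ^ 2)
        - (((γ s).1 - (γ u).1) * (deriv γ s).2 + ((γ s).2 - (γ u).2) * (-(deriv γ s).1)) := by
    funext u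
    simp only [Ff0, nsq, dot, nor, Prod.fst_sub, Prod.snd_sub]
  rw [He]
  have raw := (((hw1.pow 2).add (hw2.pow 2)).const_mul (c * curv γ s / 2)).sub
    ((hw1.mul_const ((deriv γ s).2)).add (hw2.mul_const (-(deriv γ s).1)))
  exact raw.congr_deriv (by simp only [Ff1]; ring)

lemma hasFf1 (hγ : ContDiff ℝ 4 γ) (c s t : ℝ) :
    HasDerivAt (Ff1 γ c s) (Ff2 γ c s t) t := by
  have h1 := (diff1 hγ t).hasDerivAt
  have h2 := (diff2 hγ t).hasDerivAt
  have hw1 : HasDerivAt (fun u => (γ s).1 - (γ u).1) (-(deriv γ t).1) t :=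
    (hda_fst h1).const_sub _
  have hw2 : HasDerivAt (fun u => (γ s).2 - (γ u).2) (-(deriv γ t).2) t :=
    (hda_snd h1).const_sub _
  have raw := ((((hw1.mul (hda_fst h2)).neg).sub (hw2.mul (hda_snd h2))).const_mul
      (c * curv γ s)).add
    (((hda_fst h2).mul_const ((deriv γ s).2)).add ((hda_snd h2).mul_const (-(deriv γ s).1)))
  exact raw.congr_deriv (by simp only [Ff2]; ring)

lemma hasFf2 (hγ : ContDiff ℝ 4 γ) (c s t : ℝ) :
    HasDerivAt (Ff2 γ c s) (Ff3 γ c s t) t := by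
  have h1 := (diff1 hγ t).hasDerivAt
  have h2 := (diff2 hγ t).hasDerivAt
  have h3 := (diff3 hγ t).hasDerivAt
  have hw1 : HasDerivAt (fun u => (γ s).1 - (γ u).1) (-(deriv γ t).1) t :=
    (hda_fst h1).const_sub _
  have hw2 : HasDerivAt (fun u => (γ s).2 - (γ u).2) (-(deriv γ t).2) t :=
    (hda_snd h1).const_sub _
  have raw := (((((hda_fst h2).pow 2).add ((hda_snd h2).pow 2)).sub
      ((hw1.mul (hda_fst h3)).add (hw2.mul (hda_snd h3)))).const_mul (c * curv γ s)).add
    (((hda_fst h3).mul_const ((deriv γ s).2)).add ((hda_snd h3).mul_const (-(deriv γ s).1)))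
  exact raw.congr_deriv (by simp only [Ff3]; ring)

lemma hasFf3 (hγ : ContDiff ℝ 4 γ) (c s t : ℝ) :
    HasDerivAt (Ff3 γ c s) (Ff4 γ c s t) t := by
  have h1 := (diff1 hγ t).hasDerivAt
  have h2 := (diff2 hγ t).hasDerivAt
  have h3 := (diff3 hγ t).hasDerivAt
  have h4 := (diff4 hγ t).hasDerivAt
  have hw1 : HasDerivAt (fun u => (γ s).1 - (γ u).1) (-(deriv γ t).1) t :=
    (hda_fst h1).const_sub _
  have hw2 : HasDerivAt (fun u => (γ s).2 - (γ u).2) (-(deriv γ t).2) t :=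
    (hda_snd h1).const_sub _
  have raw := ((((((hda_fst h2).mul (hda_fst h3)).add ((hda_snd h2).mul (hda_snd h3))).const_mul
      (3 : ℝ)).sub
      ((hw1.mul (hda_fst h4)).add (hw2.mul (hda_snd h4)))).const_mul (c * curv γ s)).add
    (((hda_fst h4).mul_const ((deriv γ s).2)).add ((hda_snd h4).mul_const (-(deriv γ s).1)))
  exact raw.congr_deriv (by simp only [Ff4]; ring)

lemma Ff0_self (γ : ℝ → ℝ × ℝ) (c s : ℝ) : Ff0 γ c s s = 0 := by
  simp [Ff0, nsq, dot]

lemma Ff1_self (γ : ℝ → ℝ × ℝ) (c s : ℝ) : Ff1 γ c s s = 0 := by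
  simp only [Ff1]; ring

lemma Ff2_self (hγ : ContDiff ℝ 4 γ) (hL : 0 < L)
    (hunit : ∀ s ∈ Icc 0 L, nsq (deriv γ s) = 1) {s : ℝ} (hs : s ∈ Icc 0 L) (c : ℝ) :
    Ff2 γ c s s = (c - 1) * curv γ s := by
  have hE1 := E1 hunit hs
  have hk := curv_eq hγ s
  simp only [Ff2]
  linear_combination (c * curv γ s) * hE1 + hk

lemma Ff3_self (hγ : ContDiff ℝ 4 γ) (hL : 0 < L)
    (hunit : ∀ s ∈ Icc 0 L, nsq (deriv γ s) = 1) {s : ℝ} (hs : s ∈ Icc 0 L) (c : ℝ) :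
    Ff3 γ c s s = -(deriv (curv γ) s) := by
  have hE2 := E2 hγ hL hunit hs
  have hk' := deriv_curv_eq hγ s
  simp only [Ff3]
  linear_combination (3 * (c * curv γ s)) * hE2 + hk'

/-- the fourth derivative bound on a short window. -/
lemma Ff4_bound (hγ : ContDiff ℝ 4 γ) (hL : 0 < L) (hΘ : 0 < Θ) (hC : 0 < Csharp)
    (hunit : ∀ s ∈ Icc 0 L, nsq (deriv γ s) = 1)
    (hκpos : ∀ s ∈ Icc 0 L, 0 < curv γ s)
    (hκ' : ∀ s ∈ Icc 0 L, |deriv (curv γ) s| ≤ Csharp * (curv γ s + 2 * Θ) ^ 2)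
    (hκ'' : ∀ s ∈ Icc 0 L, |deriv (deriv (curv γ)) s| ≤ Csharp * (curv γ s + 2 * Θ) ^ 3)
    {c s x y Q : ℝ} (hc0 : 0 ≤ c) (hc2 : c ≤ 2)
    (hx : 0 ≤ x) (hyL : y ≤ L) (hw : y - x ≤ 1)
    (hs : s ∈ Icc x y) (hQw : ∀ t ∈ Icc x y, curv γ t + 2 * Θ ≤ Q) :
    ∀ t ∈ Icc x y, Ff4 γ c s t ≤ Mc Csharp Q := by
  intro t ht
  have hsub : Icc x y ⊆ Icc 0 L := fun r hr => ⟨le_trans hx hr.1, le_trans hr.2 hyL⟩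
  have htL : t ∈ Icc 0 L := hsub ht
  have hsL : s ∈ Icc 0 L := hsub hs
  obtain ⟨ha, hb, hc1', hc2', hd1, hd2, he1, he2⟩ :=
    comp_bounds hγ hL hΘ hC hunit hκpos hκ' hκ'' htL (hQw t ht)
  have hQ0 : 0 < Q := lt_of_lt_of_le (by linarith [hκpos t htL]) (hQw t ht)
  have hkQ : curv γ s ≤ Q := by linarith [hQw s hs]
  have hkpos := hκpos s hsL
  have hcs : 0 ≤ c * curv γ s ∧ c * curv γ s ≤ 2 * Q := by
    constructor
    · positivity
    · nlinarith
  have hwd : |s - t| ≤ 1 := by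
    rw [abs_le]; constructor
    · linarith [hs.1, ht.2]
    · linarith [hs.2, ht.1]
  have hw1 : |(γ s).1 - (γ t).1| ≤ 1 :=
    le_trans (lip_comp hγ hL hunit hsL htL).1 hwd
  have hw2 : |(γ s).2 - (γ t).2| ≤ 1 :=
    le_trans (lip_comp hγ hL hunit hsL htL).2 hwd
  -- bound the inner bracket
  have hB1 : |3 * ((deriv (deriv γ) t).1 ^ 2 + (deriv (deriv γ) t).2 ^ 2)| ≤ 3 * (Q^2 + Q^2) := by
    rw [abs_mul, abs_of_nonneg (by positivity : (0:ℝ) ≤ (deriv (deriv γ) t).1 ^ 2 + (deriv (deriv γ) t).2 ^ 2),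
      (by norm_num : |(3:ℝ)| = 3)]
    have q1 : (deriv (deriv γ) t).1 ^ 2 ≤ Q ^ 2 := by
      rw [← sq_abs]; exact pow_le_pow_left₀ (abs_nonneg _) hc1' 2
    have q2 : (deriv (deriv γ) t).2 ^ 2 ≤ Q ^ 2 := by
      rw [← sq_abs]; exact pow_le_pow_left₀ (abs_nonneg _) hc2' 2
    linarith
  have hB2 : |4 * ((deriv γ t).1 * (deriv (deriv (deriv γ)) t).1
      + (deriv γ t).2 * (deriv (deriv (deriv γ)) t).2)|
      ≤ 4 * (1 * ((Csharp + 1) * Q ^ 2) + 1 * ((Csharp + 1) * Q ^ 2)) := by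
    rw [abs_mul]
    have := abs_add_le' (abs_mul_le ha hd1) (abs_mul_le hb hd2)
    have h4 : |(4:ℝ)| = 4 := by norm_num
    rw [h4]
    linarith [this]
  have hB3 : |((γ s).1 - (γ t).1) * (deriv (deriv (deriv (deriv γ))) t).1
      + ((γ s).2 - (γ t).2) * (deriv (deriv (deriv (deriv γ))) t).2|
      ≤ 1 * ((4 * Csharp + 1) * Q ^ 3) + 1 * ((4 * Csharp + 1) * Q ^ 3) :=
    abs_add_le' (abs_mul_le hw1 he1) (abs_mul_le hw2 he2)
  have hB4 : |(deriv (deriv (deriv (deriv γ))) t).1 * (deriv γ s).2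
      + (deriv (deriv (deriv (deriv γ))) t).2 * (-(deriv γ s).1)|
      ≤ (4 * Csharp + 1) * Q ^ 3 * 1 + (4 * Csharp + 1) * Q ^ 3 * 1 := by
    have has := (comp_bounds hγ hL hΘ hC hunit hκpos hκ' hκ'' hsL (hQw s hs))
    exact abs_add_le' (abs_mul_le he1 has.2.1) (abs_mul_le he2 (by rw [abs_neg]; exact has.1))
  have hBig : |3 * ((deriv (deriv γ) t).1 ^ 2 + (deriv (deriv γ) t).2 ^ 2)
      + 4 * ((deriv γ t).1 * (deriv (deriv (deriv γ)) t).1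
        + (deriv γ t).2 * (deriv (deriv (deriv γ)) t).2)
      - (((γ s).1 - (γ t).1) * (deriv (deriv (deriv (deriv γ))) t).1
        + ((γ s).2 - (γ t).2) * (deriv (deriv (deriv (deriv γ))) t).2)|
      ≤ (14 + 8 * Csharp) * Q ^ 2 + 2 * Bc Csharp Q := by
    exact le_trans (abs_sub_le' (abs_add_le' hB1 hB2) hB3) (le_of_eq (by rw [Bc]; ring))
  -- combine
  have hle : Ff4 γ c s t ≤ |Ff4 γ c s t| := le_abs_self _
  refine le_trans hle ?_
  simp only [Ff4]
  have hfinal := abs_add_le' (abs_mul_le (x := c * curv γ s) (X := 2 * Q)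
    (by rw [abs_of_nonneg hcs.1]; exact hcs.2) hBig) hB4
  exact le_trans hfinal (le_of_eq (by rw [Mc, Bc]; ring))

/-- Core estimate, right window: upper bound on `κ'(s)`. -/
lemma core_right (hγ : ContDiff ℝ 4 γ) (hL : 0 < L) (hΘ : 0 < Θ) (hC : 0 < Csharp)
    (hunit : ∀ s ∈ Icc 0 L, nsq (deriv γ s) = 1)
    (hκpos : ∀ s ∈ Icc 0 L, 0 < curv γ s)
    (hκ' : ∀ s ∈ Icc 0 L, |deriv (curv γ) s| ≤ Csharp * (curv γ s + 2 * Θ) ^ 2)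
    (hκ'' : ∀ s ∈ Icc 0 L, |deriv (deriv (curv γ)) s| ≤ Csharp * (curv γ s + 2 * Θ) ^ 3)
    {c s h Q : ℝ} (hc1 : 1 ≤ c) (hc2 : c ≤ 2)
    (hs0 : 0 ≤ s) (hh : 0 < h) (hh1 : h ≤ 1) (hshL : s + h ≤ L)
    (hQw : ∀ t ∈ Icc s (s + h), curv γ t + 2 * Θ ≤ Q)
    (hin : 0 ≤ c * curv γ s / 2 * nsq (γ s - γ (s + h)) - dot (γ s - γ (s + h)) (nor γ s)) :
    deriv (curv γ) s ≤ 3 * (c - 1) * curv γ s / h + Mc Csharp Q * h / 4 := by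
  have hsL : s ∈ Icc 0 L := ⟨hs0, by linarith⟩
  have hM := Ff4_bound hγ hL hΘ hC hunit hκpos hκ' hκ''
    (x := s) (y := s + h) (c := c) (s := s) (by linarith) hc2 hs0 hshL (by linarith)
    ⟨le_refl s, by linarith⟩ hQw
  have hT := taylor4_right hh.le (fun t _ => hasFf0 hγ c s t) (fun t _ => hasFf1 hγ c s t)
    (fun t _ => hasFf2 hγ c s t) (fun t _ => hasFf3 hγ c s t)
    (Ff0_self γ c s) (Ff1_self γ c s) hM
  rw [Ff2_self hγ hL hunit hsL c, Ff3_self hγ hL hunit hsL c] at hT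
  have h0 : 0 ≤ Ff0 γ c s (s + h) := hin
  have key : deriv (curv γ) s * h ^ 3
      ≤ 3 * (c - 1) * curv γ s * h ^ 2 + Mc Csharp Q * h ^ 4 / 4 := by nlinarith
  have hh3 : 0 < h ^ 3 := by positivity
  have he : 3 * (c - 1) * curv γ s / h + Mc Csharp Q * h / 4
      = (3 * (c - 1) * curv γ s * h ^ 2 + Mc Csharp Q * h ^ 4 / 4) / h ^ 3 := by
    field_simp
  rw [he, le_div_iff₀ hh3]
  exact key

/-- Core estimate, left window: lower bound on `κ'(s)`. -/
lemma core_left (hγ : ContDiff ℝ 4 γ) (hL : 0 < L) (hΘ : 0 < Θ) (hC : 0 < Csharp)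
    (hunit : ∀ s ∈ Icc 0 L, nsq (deriv γ s) = 1)
    (hκpos : ∀ s ∈ Icc 0 L, 0 < curv γ s)
    (hκ' : ∀ s ∈ Icc 0 L, |deriv (curv γ) s| ≤ Csharp * (curv γ s + 2 * Θ) ^ 2)
    (hκ'' : ∀ s ∈ Icc 0 L, |deriv (deriv (curv γ)) s| ≤ Csharp * (curv γ s + 2 * Θ) ^ 3)
    {c s h Q : ℝ} (hc1 : 1 ≤ c) (hc2 : c ≤ 2)
    (hsL' : s ≤ L) (hh : 0 < h) (hh1 : h ≤ 1) (hsh0 : 0 ≤ s - h)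
    (hQw : ∀ t ∈ Icc (s - h) s, curv γ t + 2 * Θ ≤ Q)
    (hin : 0 ≤ c * curv γ s / 2 * nsq (γ s - γ (s - h)) - dot (γ s - γ (s - h)) (nor γ s)) :
    -(3 * (c - 1) * curv γ s / h + Mc Csharp Q * h / 4) ≤ deriv (curv γ) s := by
  have hsL : s ∈ Icc 0 L := ⟨by linarith, hsL'⟩
  have hM := Ff4_bound hγ hL hΘ hC hunit hκpos hκ' hκ''
    (x := s - h) (y := s) (c := c) (s := s) (by linarith) hc2 hsh0 hsL' (by linarith)
    ⟨by linarith, le_refl s⟩ hQw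
  have hT := taylor4_left hh.le (fun t _ => hasFf0 hγ c s t) (fun t _ => hasFf1 hγ c s t)
    (fun t _ => hasFf2 hγ c s t) (fun t _ => hasFf3 hγ c s t)
    (Ff0_self γ c s) (Ff1_self γ c s) hM
  rw [Ff2_self hγ hL hunit hsL c, Ff3_self hγ hL hunit hsL c] at hT
  have h0 : 0 ≤ Ff0 γ c s (s - h) := hin
  have key : -(deriv (curv γ) s) * h ^ 3
      ≤ 3 * (c - 1) * curv γ s * h ^ 2 + Mc Csharp Q * h ^ 4 / 4 := by nlinarith
  have hh3 : 0 < h ^ 3 := by positivity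
  have he : 3 * (c - 1) * curv γ s / h + Mc Csharp Q * h / 4
      = (3 * (c - 1) * curv γ s * h ^ 2 + Mc Csharp Q * h ^ 4 / 4) / h ^ 3 := by
    field_simp
  have : -(deriv (curv γ) s) ≤ 3 * (c - 1) * curv γ s / h + Mc Csharp Q * h / 4 := by
    rw [he, le_div_iff₀ hh3]
    exact key
  linarith

/-- Segment bound: one-sided derivative estimates give a linear bound on [p, r]. -/
lemma seg_bound {v vd : ℝ → ℝ} {L p h ε C K : ℝ}
    (hp : p ∈ Icc 0 L) (hh : 0 < h) (hε : 0 ≤ ε) (hC : 0 < C)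
    (hd : ∀ t ∈ Icc 0 L, HasDerivAt v (vd t) t)
    (hlip : ∀ x ∈ Icc 0 L, ∀ y ∈ Icc 0 L, |v x - v y| ≤ C * |x - y|)
    (hup : ∀ t ∈ Icc 0 L, t + h ≤ L → K ≤ v t → -ε ≤ vd t)
    (hdown : ∀ t ∈ Icc 0 L, h ≤ t → K ≤ v t → vd t ≤ ε)
    {r : ℝ} (hr : r ∈ Icc p L) (hinv : ∀ t ∈ Icc p r, K ≤ v t) :
    |v r - v p| ≤ ε * (r - p) + C * h := by
  have hpr : p ≤ r := hr.1
  have hsub : Icc p r ⊆ Icc 0 L := fun t ht => ⟨le_trans hp.1 ht.1, le_trans ht.2 hr.2⟩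
  have hrL : r ∈ Icc 0 L := ⟨le_trans hp.1 hpr, hr.2⟩
  rw [abs_le]
  constructor
  · -- lower bound : -(ε (r-p) + C h) ≤ v r - v p
    rcases le_or_gt (L - h) p with hcase | hcase
    · -- short interval : pure Lipschitz
      have := hlip r hrL p hp
      have habs : |r - p| = r - p := abs_of_nonneg (by linarith)
      rw [habs] at this
      have hrp : r - p ≤ h := by linarith [hr.2]
      have := abs_le.mp (hlip r hrL p hp)
      rw [habs] at this
      nlinarith [this.1, this.2]
    · set m := min r (L - h) with hm
      have hpm : p ≤ m := le_min hpr (by linarith)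
      have hmr : m ≤ r := min_le_left _ _
      have hmL : m ∈ Icc 0 L := ⟨le_trans hp.1 hpm, le_trans hmr hrL.2⟩
      -- on [p, m] : monotone v t + ε t
      have hmono : MonotoneOn (fun t => v t + ε * t) (Icc p m) := by
        apply mono_step (ψ := fun t => vd t + ε)
        · intro t ht
          have htL : t ∈ Icc 0 L := hsub ⟨ht.1, le_trans ht.2 hmr⟩
          exact ((hd t htL).add (((hasDerivAt_id t).const_mul ε).congr_deriv
            (by ring))).congr_deriv (by ring)
        · intro t ht
          have htL : t ∈ Icc 0 L := hsub ⟨ht.1, le_trans ht.2 hmr⟩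
          have h1 : t + h ≤ L := by
            have : t ≤ m := ht.2
            have : t ≤ L - h := le_trans this (min_le_right _ _)
            linarith
          have h2 : K ≤ v t := hinv t ⟨ht.1, le_trans ht.2 hmr⟩
          linarith [hup t htL h1 h2]
      have h1 : v p + ε * p ≤ v m + ε * m :=
        hmono ⟨le_refl p, hpm⟩ ⟨hpm, le_refl m⟩ hpm
      -- on [m, r] : Lipschitz, length ≤ h
      have hrm : r - m ≤ h := by
        rcases min_cases r (L - h) with ⟨he, _⟩ | ⟨he, _⟩
        · rw [hm, he]; linarith
        · rw [hm, he]; linarith [hr.2]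
      have h2 := abs_le.mp (hlip r hrL m hmL)
      have habs : |r - m| = r - m := abs_of_nonneg (by linarith)
      rw [habs] at h2
      have : -(C * h) ≤ v r - v m := by nlinarith [h2.1]
      have hεm : ε * (m - p) ≤ ε * (r - p) := by nlinarith
      nlinarith
  · -- upper bound : v r - v p ≤ ε (r-p) + C h
    rcases le_or_gt r (max p h) with hcase | hcase
    · -- short interval
      have hrp : r - p ≤ h := by
        rcases max_cases p h with ⟨he, hph⟩ | ⟨he, hph⟩
        · have : r ≤ p := by rw [he] at hcase; exact hcase
          linarith
        · rw [he] at hcase; linarith [hp.1]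
      have := abs_le.mp (hlip r hrL p hp)
      have habs : |r - p| = r - p := abs_of_nonneg (by linarith)
      rw [habs] at this
      nlinarith [this.2]
    · set m := max p h with hm
      have hpm : p ≤ m := le_max_left _ _
      have hmr : m ≤ r := hcase.le
      have hmL : m ∈ Icc 0 L := ⟨le_trans hp.1 hpm, le_trans hmr hrL.2⟩
      have hanti : MonotoneOn (fun t => ε * t - v t) (Icc m r) := by
        apply mono_step (ψ := fun t => ε - vd t)
        · intro t ht
          have htL : t ∈ Icc 0 L := ⟨le_trans hmL.1 ht.1, le_trans ht.2 hrL.2⟩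
          exact ((((hasDerivAt_id t).const_mul ε).congr_deriv (by ring)).sub
            (hd t htL)).congr_deriv (by ring)
        · intro t ht
          have htL : t ∈ Icc 0 L := ⟨le_trans hmL.1 ht.1, le_trans ht.2 hrL.2⟩
          have h1 : h ≤ t := le_trans (le_max_right p h) ht.1
          have h2 : K ≤ v t := hinv t ⟨le_trans hpm ht.1, ht.2⟩
          linarith [hdown t htL h1 h2]
      have h1 : ε * m - v m ≤ ε * r - v r :=
        hanti ⟨le_refl m, hmr⟩ ⟨hmr, le_refl r⟩ hmr
      have hmp : m - p ≤ h := by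
        rcases max_cases p h with ⟨he, hph⟩ | ⟨he, hph⟩
        · rw [hm, he]; linarith
        · rw [hm, he]; linarith [hp.1]
      have h2 := abs_le.mp (hlip m hmL p hp)
      have habs : |m - p| = m - p := abs_of_nonneg (by linarith)
      rw [habs] at h2
      nlinarith [h2.2]

/-- Propagation to the right of `p` via a continuation argument. -/
lemma propagate_right {v vd : ℝ → ℝ} {L p h ε C K v₀ : ℝ}
    (hL : 0 < L) (hp : p ∈ Icc 0 L) (hvp : v p = v₀)
    (hh : 0 < h) (hε : 0 ≤ ε) (hC : 0 < C)
    (hd : ∀ t ∈ Icc 0 L, HasDerivAt v (vd t) t)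
    (hlip : ∀ x ∈ Icc 0 L, ∀ y ∈ Icc 0 L, |v x - v y| ≤ C * |x - y|)
    (hup : ∀ t ∈ Icc 0 L, t + h ≤ L → K ≤ v t → -ε ≤ vd t)
    (hdown : ∀ t ∈ Icc 0 L, h ≤ t → K ≤ v t → vd t ≤ ε)
    (hslack : ε * L + 2 * C * h + K ≤ v₀) :
    ∀ s ∈ Icc p L, |v s - v₀| ≤ ε * (s - p) + 2 * C * h := by
  set S : Set ℝ := {r | r ∈ Icc p L ∧ ∀ t ∈ Icc p r, |v t - v₀| ≤ ε * (t - p) + 2 * C * h}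
    with hS
  have hpS : p ∈ S := by
    refine ⟨⟨le_refl p, hp.2⟩, fun t ht => ?_⟩
    have : t = p := le_antisymm ht.2 ht.1
    rw [this, hvp]
    simp only [sub_self, abs_zero, mul_zero]
    positivity
  have hne : S.Nonempty := ⟨p, hpS⟩
  have hbdd : BddAbove S := ⟨L, fun r hr => hr.1.2⟩
  set T := sSup S with hT
  have hpT : p ≤ T := le_csSup hbdd hpS
  have hTL : T ≤ L := csSup_le hne fun r hr => hr.1.2
  have hTIcc : T ∈ Icc 0 L := ⟨le_trans hp.1 hpT, hTL⟩
  -- the predicate holds on [p, T)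
  have hpred : ∀ t, p ≤ t → t < T → |v t - v₀| ≤ ε * (t - p) + 2 * C * h := by
    intro t hpt htT
    obtain ⟨r, hrS, htr⟩ := exists_lt_of_lt_csSup hne htT
    exact hrS.2 t ⟨hpt, htr.le⟩
  -- the predicate holds at T
  have hTS : T ∈ S := by
    refine ⟨⟨hpT, hTL⟩, fun t ht => ?_⟩
    rcases lt_or_eq_of_le ht.2 with hlt | heq
    · exact hpred t ht.1 hlt
    · rw [heq]
      rcases eq_or_lt_of_le hpT with heqp | hpltT
      · rw [← heqp, hvp]
        simp only [sub_self, abs_zero, mul_zero]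
        positivity
      · have hcont : ContinuousAt (fun r => |v r - v₀| - ε * (r - p)) T :=
          (((hd T hTIcc).continuousAt.sub continuousAt_const).abs.sub
            ((continuousAt_const.mul (continuousAt_id.sub continuousAt_const))))
        have hev : ∀ᶠ r in 𝓝[<] T, |v r - v₀| - ε * (r - p) ≤ 2 * C * h := by
          filter_upwards [Ioo_mem_nhdsLT hpltT] with r hr
          linarith [hpred r hr.1.le hr.2]
        have := le_of_tendsto (hcont.continuousWithinAt.tendsto) hev
        linarith
  -- T = L
  have hTeq : T = L := by
    by_contra hne'
    have hTltL : T < L := lt_of_le_of_ne hTL hne'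
    have hinv : ∀ t ∈ Icc p T, K ≤ v t := by
      intro t ht
      have h1 := hTS.2 t ht
      have h2 : ε * (t - p) ≤ ε * L := by
        have : t - p ≤ L := by
          have := ht.2
          have := hp.1
          linarith [hTL]
        nlinarith
      have := abs_le.mp h1
      linarith [this.1]
    have hseg := seg_bound hp hh hε hC hd hlip hup hdown ⟨hpT, hTL⟩ hinv
    -- strict room at T
    have hGT : |v T - v₀| - ε * (T - p) ≤ C * h := by
      have h1 := hTS.2 T ⟨hpT, le_refl T⟩
      rw [hvp] at hseg
      linarith
    have hcont : ContinuousAt (fun r => |v r - v₀| - ε * (r - p)) T :=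
      (((hd T hTIcc).continuousAt.sub continuousAt_const).abs.sub
        ((continuousAt_const.mul (continuousAt_id.sub continuousAt_const))))
    have hlt : (fun r => |v r - v₀| - ε * (r - p)) T < 2 * C * h := by
      simp only []
      nlinarith [hGT]
    have hev : ∀ᶠ r in 𝓝 T, |v r - v₀| - ε * (r - p) < 2 * C * h :=
      Filter.Tendsto.eventually_lt_const hlt hcont
    obtain ⟨δ, hδ, hball⟩ := Metric.eventually_nhds_iff.mp hev
    set T' := min L (T + δ / 2) with hT'
    have hTT' : T < T' := by
      rw [hT']
      rcases min_cases L (T + δ / 2) with ⟨he, hle⟩ | ⟨he, hle⟩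
      · rw [he]; exact hTltL
      · rw [he]; linarith
    have hT'S : T' ∈ S := by
      refine ⟨⟨le_trans hpT hTT'.le, min_le_left _ _⟩, fun t ht => ?_⟩
      rcases le_or_gt t T with htT | hTt
      · exact hTS.2 t ⟨ht.1, htT⟩
      · have hdist : dist t T < δ := by
          rw [Real.dist_eq, abs_of_pos (by linarith : (0:ℝ) < t - T)]
          have : t ≤ T + δ / 2 := le_trans ht.2 (min_le_right _ _)
          linarith
        linarith [hball hdist]
    linarith [le_csSup hbdd hT'S]
  intro s hs
  exact hTS.2 s (by rw [hTeq]; exact hs)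

/-- Propagation in both directions. -/
lemma propagate_both {v vd : ℝ → ℝ} {L p h ε C K v₀ : ℝ}
    (hL : 0 < L) (hp : p ∈ Icc 0 L) (hvp : v p = v₀)
    (hh : 0 < h) (hε : 0 ≤ ε) (hC : 0 < C)
    (hd : ∀ t ∈ Icc 0 L, HasDerivAt v (vd t) t)
    (hlip : ∀ x ∈ Icc 0 L, ∀ y ∈ Icc 0 L, |v x - v y| ≤ C * |x - y|)
    (hup : ∀ t ∈ Icc 0 L, t + h ≤ L → K ≤ v t → -ε ≤ vd t)
    (hdown : ∀ t ∈ Icc 0 L, h ≤ t → K ≤ v t → vd t ≤ ε)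
    (hslack : ε * L + 2 * C * h + K ≤ v₀) :
    ∀ s ∈ Icc 0 L, |v s - v₀| ≤ ε * L + 2 * C * h := by
  intro s hs
  rcases le_or_gt p s with hps | hsp
  · have := propagate_right hL hp hvp hh hε hC hd hlip hup hdown hslack s ⟨hps, hs.2⟩
    have hb : ε * (s - p) ≤ ε * L := by nlinarith [hs.2, hp.1]
    linarith
  · -- reflected curve
    set w : ℝ → ℝ := fun t => v (L - t) with hw
    set wd : ℝ → ℝ := fun t => -(vd (L - t)) with hwd
    have hmem : ∀ t ∈ Icc (0:ℝ) L, L - t ∈ Icc 0 L := fun t ht => ⟨by linarith [ht.2], by linarith [ht.1]⟩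
    have hd' : ∀ t ∈ Icc (0:ℝ) L, HasDerivAt w (wd t) t := by
      intro t ht
      have hφ : HasDerivAt (fun x : ℝ => L - x) (-1) t := (hasDerivAt_id t).const_sub L
      have := (hd (L - t) (hmem t ht)).comp t hφ
      exact this.congr_deriv (by rw [hwd]; ring)
    have hlip' : ∀ x ∈ Icc (0:ℝ) L, ∀ y ∈ Icc (0:ℝ) L, |w x - w y| ≤ C * |x - y| := by
      intro x hx y hy
      have := hlip (L - x) (hmem x hx) (L - y) (hmem y hy)
      have he : |L - x - (L - y)| = |x - y| := by
        rw [show L - x - (L - y) = -(x - y) by ring, abs_neg]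
      rw [he] at this
      exact this
    have hup' : ∀ t ∈ Icc (0:ℝ) L, t + h ≤ L → K ≤ w t → -ε ≤ wd t := by
      intro t ht h1 h2
      have := hdown (L - t) (hmem t ht) (by linarith) h2
      show -ε ≤ -vd (L - t)
      linarith
    have hdown' : ∀ t ∈ Icc (0:ℝ) L, h ≤ t → K ≤ w t → wd t ≤ ε := by
      intro t ht h1 h2
      have := hup (L - t) (hmem t ht) (by linarith) h2
      show -vd (L - t) ≤ ε
      linarith
    have hp' : L - p ∈ Icc (0:ℝ) L := hmem p hp
    have hvp' : w (L - p) = v₀ := by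
      rw [hw]
      simp only [sub_sub_cancel]
      exact hvp
    have := propagate_right hL hp' hvp' hh hε hC hd' hlip' hup' hdown' hslack
      (L - s) ⟨by linarith, by linarith [hs.1]⟩
    have he : w (L - s) = v s := by rw [hw]; simp only [sub_sub_cancel]
    rw [he] at this
    have hb : ε * (L - s - (L - p)) ≤ ε * L := by nlinarith [hs.1, hp.2]
    linarith

lemma inv_ge_imp_le {a b : ℝ} (ha : 0 < a) (hb : 0 < b) (h : b⁻¹ ≤ a⁻¹) : a ≤ b := by
  have h1 := mul_inv_cancel₀ (ne_of_gt ha)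
  have h2 := mul_inv_cancel₀ (ne_of_gt hb)
  nlinarith [mul_nonneg (le_of_lt (mul_pos ha hb)) (sub_nonneg.mpr h)]

set_option maxHeartbeats 1000000 in
/-- Master estimate for a single curve. -/
lemma curve_bound (hγ : ContDiff ℝ 4 γ) (hL : 0 < L) (hΘ : 0 < Θ) (hC : 0 < Csharp)
    (hunit : ∀ s ∈ Icc 0 L, nsq (deriv γ s) = 1)
    (hκpos : ∀ s ∈ Icc 0 L, 0 < curv γ s)
    (hκ' : ∀ s ∈ Icc 0 L, |deriv (curv γ) s| ≤ Csharp * (curv γ s + 2 * Θ) ^ 2)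
    (hκ'' : ∀ s ∈ Icc 0 L, |deriv (deriv (curv γ)) s| ≤ Csharp * (curv γ s + 2 * Θ) ^ 3)
    {c h p : ℝ} (hc1 : 1 ≤ c) (hc2 : c ≤ 2)
    (hins : ∀ s ∈ Icc 0 L, ∀ t ∈ Icc 0 L,
      0 ≤ c * curv γ s / 2 * nsq (γ s - γ t) - dot (γ s - γ t) (nor γ s))
    (hp : p ∈ Icc 0 L) (hp1 : curv γ p = 1)
    (hh : 0 < h) (hh1 : h ≤ 1) (hhR : Csharp * h ≤ 1 / (4 * (1 + 2 * Θ)))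
    (hsl : (3 * (c - 1) * (4 * (1 + 2 * Θ)) / h + Mc Csharp (4 * (1 + 2 * Θ)) * h / 4)
        / (4 * Θ ^ 2) * L + 2 * Csharp * h ≤ 1 / (2 * (1 + 2 * Θ))) :
    ∀ s ∈ Icc 0 L, |curv γ s - 1|
      ≤ 2 * ((3 * (c - 1) * (4 * (1 + 2 * Θ)) / h + Mc Csharp (4 * (1 + 2 * Θ)) * h / 4)
        / (4 * Θ ^ 2) * L + 2 * Csharp * h) * (1 + 2 * Θ) ^ 2 := by
  set u₀ : ℝ := 1 + 2 * Θ with hu₀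
  have hu₀pos : 0 < u₀ := by rw [hu₀]; linarith
  set Q : ℝ := 4 * u₀ with hQdef
  have hQpos : 0 < Q := by rw [hQdef]; linarith
  set ε : ℝ := 3 * (c - 1) * Q / h + Mc Csharp Q * h / 4 with hεdef
  have hMcpos : 0 < Mc Csharp Q := by
    rw [Mc, Bc]; positivity
  have hεpos : 0 ≤ ε := by
    rw [hεdef]
    have h1 : 0 ≤ 3 * (c - 1) * Q / h := div_nonneg (by nlinarith) hh.le
    have h2 : 0 ≤ Mc Csharp Q * h / 4 := div_nonneg (mul_nonneg hMcpos.le hh.le) (by norm_num)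
    linarith
  set ε' : ℝ := ε / (4 * Θ ^ 2) with hε'def
  have hε'pos : 0 ≤ ε' := by rw [hε'def]; positivity
  set K : ℝ := 1 / (2 * u₀) with hKdef
  set v₀ : ℝ := u₀⁻¹ with hv₀def
  set v : ℝ → ℝ := fun t => (curv γ t + 2 * Θ)⁻¹ with hvdef
  set vd : ℝ → ℝ := fun t => -deriv (curv γ) t / (curv γ t + 2 * Θ) ^ 2 with hvddef
  have hupos : ∀ t ∈ Icc (0:ℝ) L, 0 < curv γ t + 2 * Θ := fun t ht => by
    linarith [hκpos t ht]
  have huge : ∀ t ∈ Icc (0:ℝ) L, 2 * Θ ≤ curv γ t + 2 * Θ := fun t ht => by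
    linarith [hκpos t ht]
  have hdv : ∀ t ∈ Icc (0:ℝ) L, HasDerivAt v (vd t) t := by
    intro t ht
    have hκc : HasDerivAt (curv γ) (deriv (curv γ) t) t :=
      (hasDeriv_curv hγ t).differentiableAt.hasDerivAt
    have hu : HasDerivAt (fun x => curv γ x + 2 * Θ) (deriv (curv γ) t) t := hκc.add_const _
    exact hu.inv (ne_of_gt (hupos t ht))
  have hvdb : ∀ t ∈ Icc (0:ℝ) L, |vd t| ≤ Csharp := by
    intro t ht
    have h1 := hκ' t ht
    have h2 := hupos t ht
    rw [hvddef]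
    simp only []
    rw [abs_div, abs_neg, abs_of_pos (pow_pos h2 2)]
    rw [div_le_iff₀ (pow_pos h2 2)]
    nlinarith [h1]
  have hlipv : ∀ x ∈ Icc (0:ℝ) L, ∀ y ∈ Icc (0:ℝ) L, |v x - v y| ≤ Csharp * |x - y| := by
    intro x hx y hy
    have := Convex.norm_image_sub_le_of_norm_hasDerivWithin_le (𝕜 := ℝ)
      (f := v) (f' := vd) (C := Csharp) (s := Icc 0 L)
      (fun t ht => (hdv t ht).hasDerivWithinAt)
      (fun t ht => by rw [Real.norm_eq_abs]; exact hvdb t ht)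
      (convex_Icc 0 L) hy hx
    simpa [Real.norm_eq_abs] using this
  -- window control
  have hwind : ∀ t ∈ Icc (0:ℝ) L, K ≤ v t → ∀ x ∈ Icc (0:ℝ) L, |x - t| ≤ h →
      curv γ x + 2 * Θ ≤ Q := by
    intro t ht hKv x hx hxt
    have h1 : |v x - v t| ≤ Csharp * h := by
      have := hlipv x hx t ht
      nlinarith [abs_nonneg (x - t), this]
    have h2 : Q⁻¹ ≤ v x := by
      have hq : Q⁻¹ = 1 / (4 * u₀) := by rw [hQdef]; field_simp
      have := abs_le.mp h1
      rw [hq, hKdef] at *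
      have hεK : Csharp * h ≤ 1 / (4 * u₀) := by
        rw [hu₀]; exact hhR
      have e : 1 / (2 * u₀) - 1 / (4 * u₀) = 1 / (4 * u₀) := by
        field_simp; ring
      linarith [this.1]
    exact inv_ge_imp_le (hupos x hx) hQpos h2
  -- conditional derivative bounds
  have hupv : ∀ t ∈ Icc (0:ℝ) L, t + h ≤ L → K ≤ v t → -ε' ≤ vd t := by
    intro t ht hth hKv
    have hQw : ∀ x ∈ Icc t (t + h), curv γ x + 2 * Θ ≤ Q := by
      intro x hx
      have hxL : x ∈ Icc (0:ℝ) L := ⟨le_trans ht.1 hx.1, le_trans hx.2 hth⟩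
      refine hwind t ht hKv x hxL ?_
      rw [abs_le]; constructor <;> [linarith [hx.1]; linarith [hx.2]]
    have hκ's := core_right hγ hL hΘ hC hunit hκpos hκ' hκ'' hc1 hc2 ht.1 hh hh1 hth hQw
      (hins t ht (t + h) ⟨by linarith [ht.1], hth⟩)
    have hκtQ : curv γ t ≤ Q := by linarith [hQw t ⟨le_refl t, by linarith⟩, hΘ]
    have hκ'ε : deriv (curv γ) t ≤ ε := by
      rw [hεdef]
      have hfr : 3 * (c - 1) * curv γ t / h ≤ 3 * (c - 1) * Q / h :=
        (div_le_div_iff_of_pos_right hh).mpr (by nlinarith [hκpos t ht])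
      linarith [hκ's]
    have hu2 : (2 * Θ) ^ 2 ≤ (curv γ t + 2 * Θ) ^ 2 :=
      pow_le_pow_left₀ (by linarith) (huge t ht) 2
    have hu2pos : 0 < (curv γ t + 2 * Θ) ^ 2 := pow_pos (hupos t ht) 2
    have he' : ε' * (4 * Θ ^ 2) = ε := by
      rw [hε'def]
      field_simp
    show -ε' ≤ -deriv (curv γ) t / (curv γ t + 2 * Θ) ^ 2
    rw [neg_div, neg_le_neg_iff, div_le_iff₀ hu2pos]
    nlinarith [hε'pos, hu2, he', hκ'ε]
  have hdownv : ∀ t ∈ Icc (0:ℝ) L, h ≤ t → K ≤ v t → vd t ≤ ε' := by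
    intro t ht hth hKv
    have hQw : ∀ x ∈ Icc (t - h) t, curv γ x + 2 * Θ ≤ Q := by
      intro x hx
      have hxL : x ∈ Icc (0:ℝ) L := ⟨by linarith [hx.1, ht.1], le_trans hx.2 ht.2⟩
      refine hwind t ht hKv x hxL ?_
      rw [abs_le]; constructor <;> [linarith [hx.1]; linarith [hx.2]]
    have hκ's := core_left hγ hL hΘ hC hunit hκpos hκ' hκ'' hc1 hc2 ht.2 hh hh1
      (by linarith [ht.1]) hQw
      (hins t ht (t - h) ⟨by linarith [ht.1], by linarith [ht.2]⟩)
    have hκtQ : curv γ t ≤ Q := by linarith [hQw t ⟨by linarith, le_refl t⟩, hΘ]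
    have hκ'ε : -ε ≤ deriv (curv γ) t := by
      have hfr : 3 * (c - 1) * curv γ t / h ≤ 3 * (c - 1) * Q / h :=
        (div_le_div_iff_of_pos_right hh).mpr (by nlinarith [hκpos t ht])
      rw [hεdef]
      have := hκ's
      rw [neg_le] at this ⊢
      linarith [hfr, this]
    have hu2 : (2 * Θ) ^ 2 ≤ (curv γ t + 2 * Θ) ^ 2 :=
      pow_le_pow_left₀ (by linarith) (huge t ht) 2
    have hu2pos : 0 < (curv γ t + 2 * Θ) ^ 2 := pow_pos (hupos t ht) 2
    have he' : ε' * (4 * Θ ^ 2) = ε := by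
      rw [hε'def]
      field_simp
    show -deriv (curv γ) t / (curv γ t + 2 * Θ) ^ 2 ≤ ε'
    rw [div_le_iff₀ hu2pos]
    nlinarith [hε'pos, hu2, he', hκ'ε]
  have hvp' : v p = v₀ := by
    rw [hvdef, hv₀def]
    simp only []
    rw [hp1, hu₀]
  have hKv₀ : K + K = v₀ := by
    rw [hKdef, hv₀def]
    rw [← add_div, inv_eq_one_div]
    rw [div_eq_div_iff (by linarith) (by linarith)]
    ring
  have hslack' : ε' * L + 2 * Csharp * h + K ≤ v₀ := by linarith [hsl]
  have hvb := propagate_both hL hp hvp' hh hε'pos hC hdv hlipv hupv hdownv hslack'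
  -- convert back to curvature
  intro s hs
  set ρ : ℝ := ε' * L + 2 * Csharp * h with hρdef
  have hρK : ρ ≤ K := hsl
  have hρ0 : 0 ≤ ρ := by
    have : 0 ≤ ε' * L := mul_nonneg hε'pos hL.le
    have : 0 ≤ 2 * Csharp * h := by positivity
    rw [hρdef]
    nlinarith [mul_nonneg hε'pos hL.le]
  have hvs := abs_le.mp (hvb s hs)
  have huspos := hupos s hs
  have e1 : (curv γ s + 2 * Θ) * v s = 1 := mul_inv_cancel₀ (ne_of_gt huspos)
  have e2 : u₀ * v₀ = 1 := by rw [hv₀def]; exact mul_inv_cancel₀ (ne_of_gt hu₀pos)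
  have hvsK : K ≤ v s := by
    have : v₀ - ρ ≤ v s := by linarith [hvs.1]
    linarith
  have hus2 : curv γ s + 2 * Θ ≤ 2 * u₀ := by
    apply inv_ge_imp_le huspos (by linarith)
    have : (2 * u₀)⁻¹ = K := by rw [hKdef]; field_simp
    rw [this]
    exact le_trans hvsK (le_of_eq rfl)
  have hA : curv γ s + 2 * Θ - u₀ = (curv γ s + 2 * Θ) * u₀ * (v₀ - v s) := by
    linear_combination u₀ * e1 - (curv γ s + 2 * Θ) * e2
  have hgoal : curv γ s - 1 = curv γ s + 2 * Θ - u₀ := by rw [hu₀]; ring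
  rw [hgoal, hA, abs_mul, abs_mul,
    abs_of_pos huspos, abs_of_pos hu₀pos, abs_sub_comm]
  have habs : |v s - v₀| ≤ ρ := hvb s hs
  have hx1 : 0 ≤ (2 * u₀ - (curv γ s + 2 * Θ)) * (u₀ * |v s - v₀|) :=
    mul_nonneg (by linarith) (mul_nonneg hu₀pos.le (abs_nonneg _))
  have hx3 : 0 ≤ 2 * u₀ ^ 2 * (ρ - |v s - v₀|) :=
    mul_nonneg (by positivity) (by linarith)
  nlinarith [hx1, hx3]

end Stmt3Aux

set_option maxHeartbeats 2000000 in
/-- **Statement 2.** For a sequence of injective unit-speed `C⁴` curves `γ_j` on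
`[0, L_j]` with `0 < L_j ≤ 4π`, positive curvature satisfying the derivative bounds
`|κ'| ≤ C#(κ + 2Θ)²` and `|κ''| ≤ C#(κ + 2Θ)³`, inscribed radius at least
`1/((1+1/j)κ)` everywhere, and `κ_j(p_j) = 1` for some `p_j`, the infima of the
curvatures converge to `1`. -/
theorem stmt3 (Csharp Θ : ℝ) (hC : 0 < Csharp) (hΘ : 0 < Θ)
    (L : ℕ → ℝ) (γ : ℕ → ℝ → ℝ × ℝ) (p : ℕ → ℝ)
    (hL : ∀ j : ℕ, 1 ≤ j → 0 < L j ∧ L j ≤ 4 * π)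
    (hinj : ∀ j : ℕ, 1 ≤ j → Set.InjOn (γ j) (Icc 0 (L j)))
    (hsm : ∀ j : ℕ, 1 ≤ j → ContDiff ℝ 4 (γ j))
    (hunit : ∀ j : ℕ, 1 ≤ j → ∀ s ∈ Icc 0 (L j), nsq (deriv (γ j) s) = 1)
    (hκpos : ∀ j : ℕ, 1 ≤ j → ∀ s ∈ Icc 0 (L j), 0 < curv (γ j) s)
    (hκ' : ∀ j : ℕ, 1 ≤ j → ∀ s ∈ Icc 0 (L j),
      |deriv (curv (γ j)) s| ≤ Csharp * (curv (γ j) s + 2 * Θ) ^ 2)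
    (hκ'' : ∀ j : ℕ, 1 ≤ j → ∀ s ∈ Icc 0 (L j),
      |deriv (deriv (curv (γ j))) s| ≤ Csharp * (curv (γ j) s + 2 * Θ) ^ 3)
    (hin : ∀ j : ℕ, 1 ≤ j → ∀ s ∈ Icc 0 (L j), ∀ t ∈ Icc 0 (L j),
      (1 + 1 / (j : ℝ)) * curv (γ j) s / 2 * nsq (γ j s - γ j t)
        - dot (γ j s - γ j t) (nor (γ j) s) ≥ 0)
    (hp : ∀ j : ℕ, 1 ≤ j → p j ∈ Icc 0 (L j) ∧ curv (γ j) (p j) = 1) :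
    Tendsto (fun j : ℕ => sInf (curv (γ j) '' Icc 0 (L j))) atTop (nhds 1) := by
  classical
  rw [Metric.tendsto_atTop]
  intro ε hε
  set u₀ : ℝ := 1 + 2 * Θ with hu₀def
  have hu₀ : 0 < u₀ := by rw [hu₀def]; linarith
  set Qv : ℝ := 4 * (1 + 2 * Θ) with hQvdef
  have hQv : 0 < Qv := by rw [hQvdef]; linarith
  have hMc : 0 < Stmt3Aux.Mc Csharp Qv := by rw [Stmt3Aux.Mc, Stmt3Aux.Bc]; positivity
  set X : ℝ := (3 * Qv + Stmt3Aux.Mc Csharp Qv / 4) / (4 * Θ ^ 2) with hXdef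
  have hX : 0 < X := by rw [hXdef]; positivity
  have hπ : 0 < π := Real.pi_pos
  set CC : ℝ := X * (4 * π) + 2 * Csharp with hCCdef
  have hCC : 0 < CC := by rw [hCCdef]; positivity
  have ht1 : 0 ≤ Qv * Csharp := by positivity
  have ht2 : 0 ≤ 2 * u₀ * CC := by positivity
  have ht3 : 0 ≤ 4 * CC * u₀ ^ 2 / ε := by positivity
  set W : ℝ := 1 + Qv * Csharp + 2 * u₀ * CC + 4 * CC * u₀ ^ 2 / ε with hWdef
  have hW1 : 1 ≤ W := by rw [hWdef]; linarith
  obtain ⟨N₀, hN₀⟩ := exists_nat_gt (W ^ 2)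
  refine ⟨max N₀ 1, fun j hj => ?_⟩
  have hj1 : 1 ≤ j := le_trans (le_max_right _ _) hj
  have hjN : (N₀ : ℝ) ≤ (j : ℝ) := Nat.cast_le.mpr (le_trans (le_max_left _ _) hj)
  have hjW : W ^ 2 < (j : ℝ) := lt_of_lt_of_le hN₀ hjN
  have hjpos : (0:ℝ) < (j:ℝ) := by nlinarith [sq_nonneg W]
  set sj : ℝ := Real.sqrt (j : ℝ) with hsjdef
  have hsj0 : 0 < sj := Real.sqrt_pos.mpr hjpos
  have hsjsq : sj * sj = (j : ℝ) := Real.mul_self_sqrt hjpos.le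
  have hsjW : W ≤ sj := by
    have h1 := Real.sqrt_le_sqrt hjW.le
    rwa [Real.sqrt_sq (by linarith : (0:ℝ) ≤ W), ← hsjdef] at h1
  have hsj1 : 1 ≤ sj := le_trans hW1 hsjW
  set hh : ℝ := sj⁻¹ with hhdef
  have hhpos : 0 < hh := by rw [hhdef]; positivity
  have hhinv : hh * sj = 1 := by rw [hhdef]; exact inv_mul_cancel₀ (ne_of_gt hsj0)
  have hh1 : hh ≤ 1 := by nlinarith
  have hjR : (1:ℝ) ≤ (j:ℝ) := by exact_mod_cast hj1
  have hjne : (j:ℝ) ≠ 0 := ne_of_gt hjpos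
  have hc1 : (1:ℝ) ≤ 1 + 1 / (j:ℝ) := by
    have : 0 ≤ 1 / (j:ℝ) := by positivity
    linarith
  have hc2 : 1 + 1 / (j:ℝ) ≤ 2 := by
    have : 1 / (j:ℝ) ≤ 1 := by rw [div_le_one hjpos]; linarith
    linarith
  have hhR : Csharp * hh ≤ 1 / (4 * (1 + 2 * Θ)) := by
    have he : Csharp * hh = Csharp / sj := by rw [hhdef]; ring
    rw [he, show (4 * (1 + 2 * Θ) : ℝ) = Qv from hQvdef.symm,
      div_le_div_iff₀ hsj0 hQv]
    have hQC : Qv * Csharp ≤ W := by rw [hWdef]; linarith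
    have := le_trans hQC hsjW
    linarith
  -- the main slack inequality
  have hεeq : 3 * (1 + 1 / (j:ℝ) - 1) * Qv / hh + Stmt3Aux.Mc Csharp Qv * hh / 4
      = (3 * Qv + Stmt3Aux.Mc Csharp Qv / 4) / sj := by
    rw [hhdef, ← hsjsq]
    have hsjne : sj ≠ 0 := ne_of_gt hsj0
    field_simp
    ring
  have hinner : (3 * (1 + 1 / (j:ℝ) - 1) * Qv / hh + Stmt3Aux.Mc Csharp Qv * hh / 4)
      / (4 * Θ ^ 2) * L j + 2 * Csharp * hh ≤ CC / sj := by
    rw [hεeq]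
    have e2 : (3 * Qv + Stmt3Aux.Mc Csharp Qv / 4) / sj / (4 * Θ ^ 2) = X / sj := by
      rw [hXdef]; ring
    rw [e2]
    have hXsj : 0 ≤ X / sj := by positivity
    have hL4 : L j ≤ 4 * π := (hL j hj1).2
    have hb1 : X / sj * L j ≤ X / sj * (4 * π) := mul_le_mul_of_nonneg_left hL4 hXsj
    have hb2 : 2 * Csharp * hh = 2 * Csharp / sj := by rw [hhdef]; ring
    rw [hb2]
    have e3 : X / sj * (4 * π) + 2 * Csharp / sj = CC / sj := by rw [hCCdef]; ring
    linarith
  have hCCsj : CC / sj ≤ 1 / (2 * (1 + 2 * Θ)) := by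
    rw [show (2 * (1 + 2 * Θ) : ℝ) = 2 * u₀ from by rw [hu₀def],
      div_le_div_iff₀ hsj0 (by linarith : (0:ℝ) < 2 * u₀)]
    have hQC : 2 * u₀ * CC ≤ W := by rw [hWdef]; linarith
    have := le_trans hQC hsjW
    linarith
  have hsl : (3 * (1 + 1 / (j:ℝ) - 1) * (4 * (1 + 2 * Θ)) / hh
        + Stmt3Aux.Mc Csharp (4 * (1 + 2 * Θ)) * hh / 4)
      / (4 * Θ ^ 2) * L j + 2 * Csharp * hh ≤ 1 / (2 * (1 + 2 * Θ)) :=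
    le_trans (by rw [← hQvdef] at *; exact hinner) hCCsj
  have hcb := Stmt3Aux.curve_bound (hsm j hj1) (hL j hj1).1 hΘ hC (hunit j hj1)
    (hκpos j hj1) (hκ' j hj1) (hκ'' j hj1) hc1 hc2
    (fun s hs t ht => hin j hj1 s hs t ht) (hp j hj1).1 (hp j hj1).2
    hhpos hh1 hhR hsl
  -- final numeric bound
  have hfin : ∀ s ∈ Icc 0 (L j), |curv (γ j) s - 1| ≤ ε / 2 := by
    intro s hs
    have h1 := hcb s hs
    have h2 : 2 * ((3 * (1 + 1 / (j:ℝ) - 1) * (4 * (1 + 2 * Θ)) / hh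
          + Stmt3Aux.Mc Csharp (4 * (1 + 2 * Θ)) * hh / 4)
        / (4 * Θ ^ 2) * L j + 2 * Csharp * hh) * (1 + 2 * Θ) ^ 2
        ≤ 2 * (CC / sj) * u₀ ^ 2 := by
      have hinner' := hinner
      rw [← hQvdef] at *
      have : (1 + 2 * Θ) ^ 2 = u₀ ^ 2 := by rw [hu₀def]
      rw [this]
      have h2a : 2 * ((3 * (1 + 1 / (j:ℝ) - 1) * Qv / hh
            + Stmt3Aux.Mc Csharp Qv * hh / 4)
          / (4 * Θ ^ 2) * L j + 2 * Csharp * hh) ≤ 2 * (CC / sj) := by linarith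
      exact mul_le_mul_of_nonneg_right h2a (by positivity)
    have h3 : 2 * (CC / sj) * u₀ ^ 2 ≤ ε / 2 := by
      have e : 2 * (CC / sj) * u₀ ^ 2 = (4 * CC * u₀ ^ 2) / (2 * sj) := by
        field_simp
        ring
      rw [e, div_le_div_iff₀ (by linarith : (0:ℝ) < 2 * sj) (by norm_num : (0:ℝ) < 2)]
      have hW4 : 4 * CC * u₀ ^ 2 / ε ≤ sj := by
        refine le_trans ?_ hsjW
        rw [hWdef]; linarith
      have := (div_le_iff₀ hε).mp hW4
      linarith
    linarith
  -- conclude about the infimum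
  have h1S : (1:ℝ) ∈ curv (γ j) '' Icc 0 (L j) :=
    ⟨p j, (hp j hj1).1, (hp j hj1).2⟩
  have hlb : ∀ y ∈ curv (γ j) '' Icc 0 (L j), 1 - ε / 2 ≤ y := by
    rintro y ⟨s, hs, rfl⟩
    linarith [(abs_le.mp (hfin s hs)).1]
  have hbdd : BddBelow (curv (γ j) '' Icc 0 (L j)) := ⟨1 - ε / 2, hlb⟩
  have hup : sInf (curv (γ j) '' Icc 0 (L j)) ≤ 1 := csInf_le hbdd h1S
  have hlow : 1 - ε / 2 ≤ sInf (curv (γ j) '' Icc 0 (L j)) := le_csInf ⟨1, h1S⟩ hlb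
  rw [Real.dist_eq, abs_lt]
  constructor <;> linarith

end
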